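/- arXiv:1302.4350 — 2 statements merged into one kernel-verified Lean document; each statement's English description precedes it below -/
import Mathlib

section
/- Let τ be a finite vocabulary, T a first-order theory over τ whose class of models is preserved under substructures, and S a finite subset of T (identified with the conjunction of its sentences). Then there exists a universal (Π⁰₁) sentence ξ over τ such that T ⊨ ξ and ξ ⊨ S, i.e. ξ is a Π⁰₁ interpolant between T and S. -/
/-!
Preservation theorems generalizing the Łoś–Tarski theorem
(Sankaran, Adsul, Chakraborty).

Conventions: a vocabulary is a `FirstOrder.Language`; following classical
model theory, all structures (and all substructures considered) are nonempty.
-/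

namespace LTGen

open FirstOrder FirstOrder.Language

universe u v w

variable {L : FirstOrder.Language.{u, v}}

/-- Existentially quantify the last `m` de Bruijn variables of a bounded formula. -/
def exsN {α : Type*} : ∀ (m : ℕ) {n : ℕ}, L.BoundedFormula α (n + m) → L.BoundedFormula α n
  | 0, _, φ => φ
  | m + 1, _, φ => exsN m φ.ex

/-- Universally quantify the last `m` de Bruijn variables of a bounded formula. -/
def allsN {α : Type*} : ∀ (m : ℕ) {n : ℕ}, L.BoundedFormula α (n + m) → L.BoundedFormula α n
  | 0, _, φ => φ
  | m + 1, _, φ => allsN m φ.all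

/-- `σ` is a prenex sentence `∃x₁…x_k ∀y₁…y_m ψ` with `ψ` quantifier-free:
a Σ⁰₂ sentence with exactly `k` existential quantifiers followed only by
universal quantifiers. -/
def IsExUnivSentence (k : ℕ) (σ : L.Sentence) : Prop :=
  ∃ (m : ℕ) (ψ : L.BoundedFormula Empty (0 + k + m)), ψ.IsQF ∧ σ = exsN k (allsN m ψ)

/-- `σ` is a prenex sentence `∀x₁…x_k ∃y₁…y_m ψ` with `ψ` quantifier-free:
a Π⁰₂ sentence with exactly `k` universal quantifiers followed only by
existential quantifiers. -/
def IsUnivExSentence (k : ℕ) (σ : L.Sentence) : Prop :=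
  ∃ (m : ℕ) (ψ : L.BoundedFormula Empty (0 + k + m)), ψ.IsQF ∧ σ = allsN k (exsN m ψ)

/-- `σ` is a universal (Π⁰₁) sentence `∀x₁…x_m ψ` with `ψ` quantifier-free. -/
def IsPi1Sentence (σ : L.Sentence) : Prop :=
  ∃ (m : ℕ) (ψ : L.BoundedFormula Empty (0 + m)), ψ.IsQF ∧ σ = allsN m ψ

/-- The sentence `φ` is preserved under substructures modulo `k`-sized cores
(`φ ∈ PSC(k)`): every model `M` of `φ` has a subset `C` of its universe of size
at most `k` such that every substructure of `M` whose universe contains `C`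
is a model of `φ`. -/
def SentenceInPSC (k : ℕ) (φ : L.Sentence) : Prop :=
  ∀ (M : Type w) [L.Structure M] [Nonempty M], M ⊨ φ →
    ∃ C : Finset M, C.card ≤ k ∧
      ∀ N : L.Substructure M, ↑C ⊆ (N : Set M) → Nonempty ↥N → ↥N ⊨ φ

/-- The sentence `φ` is preserved under substructures modulo a finite core
(`φ ∈ PSC_f`). -/
def SentenceInPSCf (φ : L.Sentence) : Prop :=
  ∀ (M : Type w) [L.Structure M] [Nonempty M], M ⊨ φ →
    ∃ C : Finset M,
      ∀ N : L.Substructure M, ↑C ⊆ (N : Set M) → Nonempty ↥N → ↥N ⊨ φ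

/-- `R` is a `k`-ary cover of `M` (equivalently, `M` is a `k`-ary covered
extension of the non-empty collection `R` of substructures of `M`): every
subset of the universe of `M` of size at most `k` is contained in the universe
of some member of `R`. -/
def KaryCover (k : ℕ) {M : Type w} [L.Structure M] (R : Set (L.Substructure M)) : Prop :=
  R.Nonempty ∧ ∀ C : Finset M, C.card ≤ k → ∃ N ∈ R, (C : Set M) ⊆ (N : Set M)

/-- `R` is a finitary cover of `M` (equivalently, `M` is a finitary covered
extension of `R`): every finite subset of the universe of `M` is contained in
the universe of some member of `R`. -/
def FinitaryCover {M : Type w} [L.Structure M] (R : Set (L.Substructure M)) : Prop :=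
  R.Nonempty ∧ ∀ C : Finset M, ∃ N ∈ R, (C : Set M) ⊆ (N : Set M)

/-- The sentence `φ` is preserved under `k`-ary covered extensions
(`φ ∈ PCE(k)`). -/
def SentenceInPCE (k : ℕ) (φ : L.Sentence) : Prop :=
  ∀ (M : Type w) [L.Structure M] [Nonempty M] (R : Set (L.Substructure M)),
    KaryCover k R → (∀ N ∈ R, Nonempty ↥N ∧ ↥N ⊨ φ) → M ⊨ φ

/-- The sentence `φ` is preserved under finitary covered extensions
(`φ ∈ PCE_f`). -/
def SentenceInPCEf (φ : L.Sentence) : Prop :=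
  ∀ (M : Type w) [L.Structure M] [Nonempty M] (R : Set (L.Substructure M)),
    FinitaryCover R → (∀ N ∈ R, Nonempty ↥N ∧ ↥N ⊨ φ) → M ⊨ φ

/-- The theory `T` is preserved under substructures modulo `k`-sized cores
(`T ∈ PSC(k)`). -/
def TheoryInPSC (k : ℕ) (T : L.Theory) : Prop :=
  ∀ (M : Type w) [L.Structure M] [Nonempty M], M ⊨ T →
    ∃ C : Finset M, C.card ≤ k ∧
      ∀ N : L.Substructure M, ↑C ⊆ (N : Set M) → Nonempty ↥N → ↥N ⊨ T

/-- The theory `T` is preserved under substructures modulo a finite core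
(`T ∈ PSC_f`). -/
def TheoryInPSCf (T : L.Theory) : Prop :=
  ∀ (M : Type w) [L.Structure M] [Nonempty M], M ⊨ T →
    ∃ C : Finset M,
      ∀ N : L.Substructure M, ↑C ⊆ (N : Set M) → Nonempty ↥N → ↥N ⊨ T

/-- The theory `T` is preserved under `k`-ary covered extensions
(`T ∈ PCE(k)`). -/
def TheoryInPCE (k : ℕ) (T : L.Theory) : Prop :=
  ∀ (M : Type w) [L.Structure M] [Nonempty M] (R : Set (L.Substructure M)),
    KaryCover k R → (∀ N ∈ R, Nonempty ↥N ∧ ↥N ⊨ T) → M ⊨ T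

/-- The theory `T` is preserved under finitary covered extensions
(`T ∈ PCE_f`). -/
def TheoryInPCEf (T : L.Theory) : Prop :=
  ∀ (M : Type w) [L.Structure M] [Nonempty M] (R : Set (L.Substructure M)),
    FinitaryCover R → (∀ N ∈ R, Nonempty ↥N ∧ ↥N ⊨ T) → M ⊨ T

/-- A class `S` of `τ`-structures is preserved under substructures modulo
`k`-sized cores (`S ∈ PSC(k)`). -/
def ClassInPSC (k : ℕ) (S : ∀ M : Type w, L.Structure M → Prop) : Prop :=
  ∀ (M : Type w) [str : L.Structure M] [Nonempty M], S M str →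
    ∃ C : Finset M, C.card ≤ k ∧
      ∀ N : L.Substructure M, ↑C ⊆ (N : Set M) → Nonempty ↥N → S ↥N inferInstance

/-- A class `S` of `τ`-structures is preserved under substructures modulo a
finite core (`S ∈ PSC_f`). -/
def ClassInPSCf (S : ∀ M : Type w, L.Structure M → Prop) : Prop :=
  ∀ (M : Type w) [str : L.Structure M] [Nonempty M], S M str →
    ∃ C : Finset M,
      ∀ N : L.Substructure M, ↑C ⊆ (N : Set M) → Nonempty ↥N → S ↥N inferInstance

/-- A class `S` of `τ`-structures is preserved under `k`-ary covered
extensions (`S ∈ PCE(k)`). -/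
def ClassInPCE (k : ℕ) (S : ∀ M : Type w, L.Structure M → Prop) : Prop :=
  ∀ (M : Type w) [str : L.Structure M] [Nonempty M] (R : Set (L.Substructure M)),
    KaryCover k R → (∀ N ∈ R, Nonempty ↥N ∧ S ↥N inferInstance) → S M str

/-- A class `S` of `τ`-structures is preserved under finitary covered
extensions (`S ∈ PCE_f`). -/
def ClassInPCEf (S : ∀ M : Type w, L.Structure M → Prop) : Prop :=
  ∀ (M : Type w) [str : L.Structure M] [Nonempty M] (R : Set (L.Substructure M)),
    FinitaryCover R → (∀ N ∈ R, Nonempty ↥N ∧ S ↥N inferInstance) → S M str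

/-- `IsSigmaPi true N φ` says that `φ` is a Σ⁰_N formula: a prenex formula
whose quantifier prefix consists of `N` consecutive (possibly empty) blocks of
like quantifiers beginning with an existential block, with quantifier-free
matrix. `IsSigmaPi false N φ` says that `φ` is a Π⁰_N formula (first block
universal). `Σ⁰₀ = Π⁰₀ =` quantifier-free. The `n` de Bruijn variables of `φ`
are its free variables. -/
def IsSigmaPi : Bool → ℕ → ∀ {n : ℕ}, L.BoundedFormula Empty n → Prop
  | _, 0, _, φ => φ.IsQF
  | b, N + 1, n, φ =>
      ∃ (m : ℕ) (ψ : L.BoundedFormula Empty (n + m)),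
        IsSigmaPi (!b) N ψ ∧ φ = cond b (exsN m ψ) (allsN m ψ)

/-- The embedding `f : M ↪ N` is Σ⁰_n-elementary (its image is a
Σ⁰_n-elementary substructure of `N`): for every Σ⁰_n formula `φ(x₁,…,x_r)` and
every `r`-tuple `a` from `M`, `N ⊨ φ(f(a))` iff `M ⊨ φ(a)`. -/
def SigmaNElementary (nl : ℕ) {M N : Type*} [L.Structure M] [L.Structure N]
    (f : M ↪[L] N) : Prop :=
  ∀ (r : ℕ) (φ : L.BoundedFormula Empty r), IsSigmaPi true nl φ →
    ∀ a : Fin r → M,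
      (φ.Realize (fun x => x.elim) (f ∘ a) ↔ φ.Realize (fun x => x.elim) a)

section Aux

open FirstOrder.Language.BoundedFormula

variable {P : Type*} [L.Structure P]

theorem realize_allsN {m : ℕ} (ψ : L.BoundedFormula Empty (0 + m)) (v : Empty → P)
    (xs : Fin 0 → P) :
    (allsN m ψ).Realize v xs ↔ ∀ ys : Fin (0 + m) → P, ψ.Realize v ys := by
  induction m with
  | zero =>
    constructor
    · intro h ys; rwa [show ys = xs from funext fun i => i.elim0]
    · intro h; exact h xs
  | succ m ih =>
    rw [show allsN (m + 1) ψ = allsN m ψ.all from rfl, ih ψ.all]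
    constructor
    · intro h zs
      have e : Fin.snoc (Fin.init zs) (zs (Fin.last (0 + m))) = zs := Fin.snoc_init_self zs
      rw [← e]
      exact (BoundedFormula.realize_all).1 (h (Fin.init zs)) _
    · intro h ys
      rw [BoundedFormula.realize_all]
      intro a
      exact h (Fin.snoc ys a)

theorem realize_castLE_of_isQF {α : Type*} :
    ∀ {m : ℕ} {φ : L.BoundedFormula α m}, φ.IsQF → ∀ {n : ℕ} (h : m ≤ n)
      (v : α → P) (xs : Fin n → P),
      (φ.castLE h).Realize v xs ↔ φ.Realize v (xs ∘ Fin.castLE h) := by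
  intro m φ hφ
  induction hφ with
  | falsum => intro n h v xs; exact Iff.rfl
  | of_isAtomic ha =>
    cases ha with
    | equal t₁ t₂ =>
      intro n h v xs
      simp [Term.bdEqual, castLE, BoundedFormula.Realize, Sum.elim_comp_map]
    | rel R ts =>
      intro n h v xs
      simp [Relations.boundedFormula, castLE, BoundedFormula.Realize, Sum.elim_comp_map]
  | imp h₁ h₂ ih₁ ih₂ =>
    intro n h v xs
    simp only [castLE, BoundedFormula.realize_imp]
    rw [ih₁ h, ih₂ h]

theorem IsQF.restrictFreeVar' {α β : Type*} [DecidableEq α] :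
    ∀ {n : ℕ} {φ : L.BoundedFormula α n}, φ.IsQF → ∀ (f : φ.freeVarFinset → β),
      (φ.restrictFreeVar f).IsQF := by
  intro n φ hφ
  induction hφ with
  | falsum => intro f; exact isQF_bot
  | of_isAtomic ha =>
    cases ha with
    | equal t₁ t₂ => intro f; exact (IsAtomic.equal _ _).isQF
    | rel R ts => intro f; exact (IsAtomic.rel _ _).isQF
  | imp h₁ h₂ ih₁ ih₂ => intro f; exact (ih₁ _).imp (ih₂ _)

end Aux

section Conj

open FirstOrder.Language.BoundedFormula

/-- top is Π⁰₁ -/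
theorem isPi1_top : IsPi1Sentence (⊤ : L.Sentence) :=
  ⟨0, ⊤, BoundedFormula.IsQF.top, rfl⟩

theorem realize_top_sentence (M : Type*) [L.Structure M] : M ⊨ (⊤ : L.Sentence) := by
  exact BoundedFormula.realize_top.mpr trivial

theorem comp_dite_eq {M : Type*} [Nonempty M] {m n : ℕ} (h : m ≤ n) (ys : Fin m → M) :
    ((fun j : Fin n => if hj : (j : ℕ) < m then ys ⟨j, hj⟩ else Classical.arbitrary M) ∘
      Fin.castLE h) = ys := by
  funext i
  simp only [Function.comp_apply]
  rw [dif_pos (show ((Fin.castLE h i : Fin n) : ℕ) < m from i.isLt)]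
  exact congrArg ys (Fin.ext rfl)

theorem comp_dite_eq₂ {M : Type*} [Nonempty M] {m₁ m₂ n : ℕ} (h : m₁ + m₂ ≤ n) (ys : Fin m₂ → M) :
    (((fun j : Fin n => if hj : m₁ ≤ (j : ℕ) ∧ (j : ℕ) - m₁ < m₂ then ys ⟨(j : ℕ) - m₁, hj.2⟩
      else Classical.arbitrary M) ∘ Fin.castLE h) ∘ Fin.natAdd m₁) = ys := by
  funext i
  simp only [Function.comp_apply]
  rw [dif_pos (show m₁ ≤ ((Fin.castLE h (Fin.natAdd m₁ i) : Fin n) : ℕ) ∧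
      ((Fin.castLE h (Fin.natAdd m₁ i) : Fin n) : ℕ) - m₁ < m₂ from
      ⟨Nat.le_add_right _ _, (by have := i.isLt; omega : m₁ + (i : ℕ) - m₁ < m₂)⟩)]
  exact congrArg ys (Fin.ext (show m₁ + (i : ℕ) - m₁ = (i : ℕ) by omega))

/-- Conjunction of two Π⁰₁ sentences is (equivalent to) a Π⁰₁ sentence. -/
theorem isPi1_inf {ξ₁ ξ₂ : L.Sentence} (h₁ : IsPi1Sentence ξ₁) (h₂ : IsPi1Sentence ξ₂) :
    ∃ ξ : L.Sentence, IsPi1Sentence ξ ∧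
      ∀ (M : Type*) [L.Structure M] [Nonempty M], M ⊨ ξ ↔ (M ⊨ ξ₁ ∧ M ⊨ ξ₂) := by
  obtain ⟨m₁, ψ₁, hq₁, rfl⟩ := h₁
  obtain ⟨m₂, ψ₂, hq₂, rfl⟩ := h₂
  have hle₁ : 0 + m₁ ≤ 0 + (m₁ + m₂) := by omega
  have hle₂ : m₁ + (0 + m₂) ≤ 0 + (m₁ + m₂) := by omega
  set ψ₂' : L.BoundedFormula Empty (m₁ + (0 + m₂)) :=
    ψ₂.relabel (fun x : Empty => x.elim) with hψ₂'
  refine ⟨allsN (m₁ + m₂) ((ψ₁.castLE hle₁) ⊓ (ψ₂'.castLE hle₂)),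
    ⟨m₁ + m₂, _, ((hq₁.castLE).inf ((hq₂.relabel _).castLE)), rfl⟩, ?_⟩
  intro M _ _
  have hq₂' : ψ₂'.IsQF := hq₂.relabel _
  constructor
  · intro h
    have h' := (realize_allsN _ _ _).1 h
    constructor
    · rw [Sentence.Realize, Formula.Realize, realize_allsN]
      intro ys
      have hm : (0 : ℕ) + m₁ ≤ 0 + (m₁ + m₂) := hle₁
      have key := ((BoundedFormula.realize_inf).1 (h' (fun j : Fin (0 + (m₁ + m₂)) =>
        if hj : (j : ℕ) < 0 + m₁ then ys ⟨j, hj⟩ else Classical.arbitrary M))).1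
      rw [realize_castLE_of_isQF hq₁, comp_dite_eq hle₁ ys] at key
      exact key
    · rw [Sentence.Realize, Formula.Realize, realize_allsN]
      intro ys
      have key := ((BoundedFormula.realize_inf).1 (h' (fun j : Fin (0 + (m₁ + m₂)) =>
        if hj : m₁ ≤ (j : ℕ) ∧ (j : ℕ) - m₁ < 0 + m₂ then ys ⟨(j : ℕ) - m₁, hj.2⟩
        else Classical.arbitrary M))).2
      rw [realize_castLE_of_isQF hq₂', hψ₂', BoundedFormula.realize_relabel] at key
      rw [show ((((fun j : Fin (0 + (m₁ + m₂)) =>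
        if hj : m₁ ≤ (j : ℕ) ∧ (j : ℕ) - m₁ < 0 + m₂ then ys ⟨(j : ℕ) - m₁, hj.2⟩
        else Classical.arbitrary M) ∘ Fin.castLE hle₂) ∘ Fin.natAdd m₁)) = ys from
        comp_dite_eq₂ hle₂ ys] at key
      have hv : (Sum.elim (default : Empty → M)
          (((fun j : Fin (0 + (m₁ + m₂)) =>
        if hj : m₁ ≤ (j : ℕ) ∧ (j : ℕ) - m₁ < 0 + m₂ then ys ⟨(j : ℕ) - m₁, hj.2⟩
        else Classical.arbitrary M) ∘ Fin.castLE hle₂) ∘ Fin.castAdd (0 + m₂)) ∘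
          fun x : Empty => x.elim) = (default : Empty → M) := funext fun x => x.elim
      rw [hv] at key
      exact key
  · rintro ⟨hA, hB⟩
    rw [Sentence.Realize, Formula.Realize, realize_allsN] at hA hB ⊢
    intro ys
    rw [BoundedFormula.realize_inf, realize_castLE_of_isQF hq₁, realize_castLE_of_isQF hq₂']
    refine ⟨hA _, ?_⟩
    rw [hψ₂', BoundedFormula.realize_relabel]
    have hv : (Sum.elim (default : Empty → M) (((ys ∘ Fin.castLE hle₂)) ∘ Fin.castAdd (0 + m₂)) ∘
        fun x : Empty => x.elim) = (default : Empty → M) := funext fun x => x.elim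
    rw [hv]
    exact hB _

end Conj

section Fold

/-- A finite set of Π⁰₁ sentences has a single Π⁰₁ "conjunction". -/
theorem exists_pi1_conj (F : Finset L.Sentence) (hF : ∀ ξ ∈ F, IsPi1Sentence ξ) :
    ∃ ξ : L.Sentence, IsPi1Sentence ξ ∧
      ∀ (M : Type*) [L.Structure M] [Nonempty M], M ⊨ ξ ↔ ∀ ξ' ∈ F, M ⊨ ξ' := by
  classical
  induction F using Finset.induction_on with
  | empty =>
    exact ⟨⊤, isPi1_top, fun M _ _ => ⟨fun _ ξ' h => absurd h (Finset.notMem_empty _),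
      fun _ => realize_top_sentence M⟩⟩
  | insert _ _ hnot ih =>
    rename_i ξ₁ F'
    obtain ⟨ξ₂, hξ₂, hsem₂⟩ := ih fun ξ' h => hF ξ' (Finset.mem_insert_of_mem h)
    obtain ⟨ξ, hξ, hsem⟩ := isPi1_inf (hF ξ₁ (Finset.mem_insert_self _ _)) hξ₂
    refine ⟨ξ, hξ, fun M _ _ => ?_⟩
    rw [hsem M, hsem₂ M]
    constructor
    · rintro ⟨h₁, h₂⟩ ξ' hξ'
      rcases Finset.mem_insert.1 hξ' with rfl | h
      · exact h₁
      · exact h₂ _ h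
    · intro h
      exact ⟨h _ (Finset.mem_insert_self _ _), fun ξ' h' => h _ (Finset.mem_insert_of_mem h')⟩

end Fold

section Diagram

universe x y z

open FirstOrder.Language.BoundedFormula FirstOrder.Language.Structure

/-- The quantifier-free diagram of `M`, as a theory over `L[[M]]`. -/
def qfDiag (M : Type x) [L.Structure M] : L[[M]].Theory :=
  { σ | ∃ φ : L.Formula M, φ.IsQF ∧ φ.Realize (fun a : M => a) ∧ σ = Formula.equivSentence φ }

/-- A model of the quantifier-free diagram of `M` admits an `L`-embedding of `M`. -/
noncomputable def qfDiagEmbedding {M : Type x} {N : Type y} [L.Structure M] [L.Structure N]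
    [L[[M]].Structure N] [(lhomWithConstants L M).IsExpansionOn N]
    (h : ∀ σ ∈ qfDiag (L := L) M, N ⊨ σ) : M ↪[L] N := by
  have key : ∀ φ : L.Formula M, φ.IsQF → φ.Realize (fun a : M => a) →
      φ.Realize (fun a : M => ((L.con a : L[[M]].Constants) : N)) := fun φ hqf hid =>
    (Formula.realize_equivSentence N φ).1 (h _ ⟨φ, hqf, hid, rfl⟩)
  refine ⟨⟨fun a => ((L.con a : L[[M]].Constants) : N), ?_⟩, ?_, ?_⟩
  · intro a b hab
    by_contra hne
    have := key (Formula.not (Term.equal (Term.var a) (Term.var b)))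
      ((IsAtomic.equal _ _).isQF.not)
      (by simp only [Formula.realize_not, Formula.realize_equal, Term.realize_var]; exact hne)
    rw [Formula.realize_not, Formula.realize_equal] at this
    exact this (by simpa [Term.realize_var] using hab)
  · intro n f x
    have := key (Term.equal (Term.func f fun i => Term.var (x i)) (Term.var (funMap f x)))
      ((IsAtomic.equal _ _).isQF)
      (by simp [Formula.realize_equal, Term.realize_var])
    rw [Formula.realize_equal] at this
    simpa [Term.realize, Function.comp_def] using this.symm
  · intro n r x
    constructor
    · intro hr
      by_contra hnr
      have := key ((r.formula fun i => Term.var (x i)).not)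
        ((IsAtomic.rel _ _).isQF.not)
        (by rw [Formula.realize_not, Formula.realize_rel]; simpa [Term.realize_var] using hnr)
      rw [Formula.realize_not, Formula.realize_rel] at this
      exact this (by simpa [Term.realize_var, Function.comp_def] using hr)
    · intro hr
      have := key (r.formula fun i => Term.var (x i))
        ((IsAtomic.rel _ _).isQF)
        (by rw [Formula.realize_rel]; simpa [Term.realize_var] using hr)
      rw [Formula.realize_rel] at this
      simpa [Term.realize_var, Function.comp_def] using this

end Diagram

section LemmaA

universe x z

open FirstOrder.Language.BoundedFormula

/-- From a quantifier-free formula `χ` with free variables in `M`, a Π⁰₁ sentence `ξ`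
such that `ξ` fails in `P` exactly when `χ` is satisfiable in `P`. -/
theorem exists_pi1_of_qf {M : Type x} [L.Structure M] (χ : L.Formula M) (hχ : χ.IsQF) :
    ∃ ξ : L.Sentence, IsPi1Sentence ξ ∧
      ∀ (P : Type z) [L.Structure P] [Nonempty P],
        ((¬ P ⊨ ξ) ↔ ∃ w : M → P, χ.Realize w) := by
  classical
  have hsub : ↑χ.freeVarFinset ⊆ (↑χ.freeVarFinset : Set M) := subset_rfl
  set sset : Set M := ↑χ.freeVarFinset with hsset
  haveI : Fintype (↥sset) := FinsetCoe.fintype χ.freeVarFinset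
  set m := Fintype.card (↥sset) with hm
  set e : (↥sset) ≃ Fin m := Fintype.equivFin _ with he
  set χ' : L.BoundedFormula (↥sset) 0 := χ.restrictFreeVar (Set.inclusion hsub) with hχ'
  have hχ'qf : χ'.IsQF := IsQF.restrictFreeVar' hχ _
  set χ'' : L.BoundedFormula Empty (m + 0) :=
    χ'.relabel (fun x : ↥sset => Sum.inr (e x)) with hχ''
  have hχ''qf : χ''.IsQF := hχ'qf.relabel _
  have hle : m + 0 ≤ 0 + m := by omega
  set ψ : L.BoundedFormula Empty (0 + m) := χ''.castLE hle with hψ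
  have hψqf : ψ.IsQF := hχ''qf.castLE
  refine ⟨allsN m ψ.not, ⟨m, ψ.not, hψqf.not, rfl⟩, ?_⟩
  intro P _ _
  have hchain : ∀ ys : Fin (0 + m) → P,
      ψ.Realize (default : Empty → P) ys ↔
        χ'.Realize (fun x : ↥sset => ys (Fin.castLE hle (Fin.castAdd 0 (e x))))
          (fun i : Fin 0 => i.elim0) := by
    intro ys
    rw [hψ, realize_castLE_of_isQF hχ''qf, hχ'', BoundedFormula.realize_relabel]
    have hval : (Sum.elim (default : Empty → P) ((ys ∘ Fin.castLE hle) ∘ Fin.castAdd 0) ∘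
        fun x : ↥sset => Sum.inr (e x)) =
        (fun x : ↥sset => ys (Fin.castLE hle (Fin.castAdd 0 (e x)))) := rfl
    rw [hval]
    rw [show ((ys ∘ Fin.castLE hle) ∘ Fin.natAdd m) = (fun i : Fin 0 => i.elim0) from
      funext fun i => i.elim0]
  have hall : P ⊨ allsN m ψ.not ↔ ∀ ys : Fin (0 + m) → P, ¬ ψ.Realize default ys := by
    rw [Sentence.Realize, Formula.Realize, realize_allsN]
    constructor
    · intro h ys; have := h ys; rwa [BoundedFormula.realize_not] at this
    · intro h ys; rw [BoundedFormula.realize_not]; exact h ys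
  rw [hall]
  push_neg
  constructor
  · rintro ⟨ys, hys⟩
    set w : M → P := fun a =>
      if ha : a ∈ sset then ys (Fin.castLE hle (Fin.castAdd 0 (e ⟨a, ha⟩)))
      else Classical.arbitrary P with hw
    refine ⟨w, ?_⟩
    rw [Formula.Realize]
    have h1 : (w ∘ (Subtype.val : ↥sset → M)) =
        (fun x : ↥sset => ys (Fin.castLE hle (Fin.castAdd 0 (e x)))) := by
      funext x
      show w ↑x = _
      rw [hw]
      simp only
      rw [dif_pos x.2]
    have h2 := (hchain ys).1 hys
    rw [← h1] at h2
    have h3 := (BoundedFormula.realize_restrictFreeVar' hsub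
      (v := w) (xs := (fun i : Fin 0 => i.elim0))).1 (by rw [← hχ']; exact h2)
    rwa [show (fun i : Fin 0 => i.elim0) = (default : Fin 0 → P) from Subsingleton.elim _ _] at h3
  · rintro ⟨w, hwreal⟩
    have h0m : (0 + m) = m := by omega
    refine ⟨fun j => w ↑(e.symm (Fin.cast h0m j)), ?_⟩
    rw [hchain]
    have h1 : (fun x : ↥sset =>
        (fun j : Fin (0 + m) => w ↑(e.symm (Fin.cast h0m j)))
          (Fin.castLE hle (Fin.castAdd 0 (e x)))) = (w ∘ (Subtype.val : ↥sset → M)) := by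
      funext x
      show w ↑(e.symm (Fin.cast h0m (Fin.castLE hle (Fin.castAdd 0 (e x))))) = w ↑x
      congr 1
      rw [show Fin.cast h0m (Fin.castLE hle (Fin.castAdd 0 (e x))) = e x from Fin.ext rfl]
      rw [Equiv.symm_apply_apply]
    rw [h1, hχ']
    apply (BoundedFormula.realize_restrictFreeVar' hsub (v := w)
      (xs := (fun i : Fin 0 => i.elim0))).2
    rwa [show (fun i : Fin 0 => i.elim0) = (default : Fin 0 → P) from Subsingleton.elim _ _,
      ← Formula.Realize]

end LemmaA

section Transfer

universe x y

open FirstOrder.Language.BoundedFormula Cardinal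

theorem isQF_foldr_inf {α : Type*} (l : List (L.BoundedFormula α 0))
    (h : ∀ φ ∈ l, φ.IsQF) : (l.foldr (· ⊓ ·) ⊤).IsQF := by
  induction l with
  | nil => exact BoundedFormula.IsQF.top
  | cons a l ih =>
    exact (h a List.mem_cons_self).inf (ih fun φ hφ => h φ (List.mem_cons_of_mem _ hφ))

/-- Transfer `T` along an embedding of a countable structure into a model of `T`,
using preservation of `T` under (`Type w`) substructures. -/
theorem modelsT_of_embedding {T : L.Theory}
    (hT : ∀ (K : Type w) [L.Structure K] [Nonempty K], K ⊨ T →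
        ∀ N : L.Substructure K, Nonempty ↥N → ↥N ⊨ T)
    [Finite L.Symbols]
    {Mc : Type x} {N : Type y} [L.Structure Mc] [L.Structure N] [Nonempty Mc] [Nonempty N]
    [Countable Mc] (hN : N ⊨ T) (g : Mc ↪[L] N) : Mc ⊨ T := by
  classical
  -- First: get a countable model `Q` of `T` with an embedding of `Mc`.
  obtain ⟨Q, _, _, _, hQT, gQ⟩ :
      ∃ (Q : Type y) (_ : L.Structure Q) (_ : Nonempty Q) (_ : Countable Q),
        Q ⊨ T ∧ Nonempty (Mc ↪[L] Q) := by
    cases finite_or_infinite N with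
    | inl hfin =>
      exact ⟨N, inferInstance, inferInstance, inferInstance, hN, ⟨g⟩⟩
    | inr hinf =>
      have hLcard : L.card ≤ ℵ₀ := by
        have : Countable L.Symbols := Finite.to_countable
        exact Cardinal.mk_le_aleph0
      have hrangecnt : Countable ↥(Set.range g) := (Set.countable_range g).to_subtype
      obtain ⟨S, hSsub, hScard⟩ := exists_elementarySubstructure_card_eq L
        (Set.range g) (ℵ₀ : Cardinal.{y}) le_rfl
        (by rw [Cardinal.lift_le]; exact Cardinal.mk_le_aleph0)
        (by refine le_trans (Cardinal.lift_le.2 hLcard) ?_; rw [Cardinal.lift_aleph0, Cardinal.lift_aleph0])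
        (by rw [Cardinal.lift_le]; exact Cardinal.aleph0_le_mk N)
      have hcnt : Countable ↥S := by
        rw [Cardinal.lift_inj] at hScard
        exact Cardinal.mk_le_aleph0_iff.1 (le_of_eq hScard)
      have hQT : ↥S ⊨ T := (S.theory_model_iff T).2 hN
      have gmem : ∀ c : Mc, g c ∈ S.toSubstructure := fun c => hSsub ⟨c, rfl⟩
      refine ⟨↥S, inferInstance, ?_, hcnt, hQT, ⟨g.codRestrict S.toSubstructure gmem⟩⟩
      exact ⟨⟨g (Classical.arbitrary Mc), gmem _⟩⟩
  obtain ⟨gQ⟩ := gQ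
  -- Shrink `Q` into `Type w`.
  haveI : Small.{w} Q := Countable.toSmall Q
  letI : L.Structure (Shrink.{w} Q) := (equivShrink Q).inducedStructure
  haveI : Nonempty (Shrink.{w} Q) := (equivShrink Q).symm.nonempty
  have hiso : Q ≃[L] Shrink.{w} Q := (equivShrink Q).inducedStructureEquiv
  haveI hQT' : Shrink.{w} Q ⊨ T := by
    haveI := hQT
    exact StrongHomClass.theory_model hiso
  have emb : Mc ↪[L] Shrink.{w} Q := hiso.toEmbedding.comp gQ
  have hrangeT : ↥(emb.toHom.range) ⊨ T :=
    hT (Shrink.{w} Q) hQT' emb.toHom.range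
      ⟨⟨emb (Classical.arbitrary Mc), emb.toHom.mem_range_self _⟩⟩
  haveI := hrangeT
  exact StrongHomClass.theory_model emb.equivRange.symm

end Transfer

section Core

open FirstOrder.Language.BoundedFormula Cardinal

/-- A countable structure satisfying all Π⁰₁ consequences of `T` is a model of `T`,
provided `T` is preserved under substructures (at `Type w`). -/
theorem core_models {T : L.Theory} [Finite L.Symbols]
    (hT : ∀ (K : Type w) [L.Structure K] [Nonempty K], K ⊨ T →
        ∀ N : L.Substructure K, Nonempty ↥N → ↥N ⊨ T)
    (Mc : Type (max u v)) [L.Structure Mc] [Nonempty Mc] [Countable Mc]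
    (hMΓ : ∀ ξ : L.Sentence, IsPi1Sentence ξ →
      ¬ (T ∪ {Formula.not ξ} : L.Theory).IsSatisfiable → Mc ⊨ ξ) : Mc ⊨ T := by
  classical
  set TD : L[[Mc]].Theory := (L.lhomWithConstants Mc).onTheory T ∪ qfDiag Mc with hTD
  have hsat : TD.IsSatisfiable := by
    rw [Theory.isSatisfiable_iff_isFinitelySatisfiable]
    intro T0 hT0
    set D₀ : Finset (L[[Mc]].Sentence) := T0.filter (fun σ => σ ∈ qfDiag Mc) with hD₀
    have hwit : ∀ δ ∈ D₀, ∃ φ : L.Formula Mc, φ.IsQF ∧ φ.Realize (fun a : Mc => a) ∧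
        δ = Formula.equivSentence φ := fun δ hδ => (Finset.mem_filter.1 hδ).2
    choose Φ hΦqf hΦid hΦeq using hwit
    set lst : List (L.Formula Mc) := D₀.attach.toList.map (fun δ => Φ δ.1 δ.2) with hlst
    set χ : L.Formula Mc := lst.foldr (· ⊓ ·) ⊤ with hχ
    have hχqf : χ.IsQF := isQF_foldr_inf _ (by
      intro φ hφ
      rw [hlst] at hφ
      obtain ⟨δ, _, rfl⟩ := List.mem_map.1 hφ
      exact hΦqf δ.1 δ.2)
    have hχreal : ∀ (P : Type (max u v)) [L.Structure P] (v : Mc → P),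
        χ.Realize v ↔ ∀ δ (hδ : δ ∈ D₀), (Φ δ hδ).Realize v := by
      intro P _ v
      rw [hχ, Formula.Realize, BoundedFormula.realize_foldr_inf]
      constructor
      · intro h δ hδ
        exact h _ (List.mem_map.2 ⟨⟨δ, hδ⟩, by simp, rfl⟩)
      · intro h φ hφ
        obtain ⟨δ, _, rfl⟩ := List.mem_map.1 hφ
        exact h δ.1 δ.2
    obtain ⟨ξ₀, hξ₀pi, hξ₀sem⟩ := exists_pi1_of_qf χ hχqf
    by_cases hcase : (T ∪ {Formula.not ξ₀} : L.Theory).IsSatisfiable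
    · obtain ⟨P⟩ := hcase
      haveI hPT' : (P : Type (max u v)) ⊨ (T ∪ {Formula.not ξ₀} : L.Theory) := P.is_model
      have hPT : (P : Type (max u v)) ⊨ T := (Theory.model_union_iff.1 hPT').1
      have hPnot : ¬ (P : Type (max u v)) ⊨ ξ₀ := by
        have h2 := (Theory.model_union_iff.1 hPT').2
        rw [Theory.model_singleton_iff, Sentence.realize_not] at h2
        exact h2
      obtain ⟨wv, hwv⟩ := (hξ₀sem (P : Type (max u v))).1 hPnot
      letI : (constantsOn Mc).Structure P := constantsOn.structure wv
      have hmodel : (P : Type (max u v)) ⊨ (↑T0 : L[[Mc]].Theory) := by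
        rw [Theory.model_iff]
        intro φ hφ
        rcases hT0 hφ with h1 | h2
        · obtain ⟨ψ0, hψ0T, rfl⟩ := LHom.mem_onTheory.1 h1
          rw [LHom.realize_onSentence]
          exact hPT.realize_of_mem _ hψ0T
        · have hφD : φ ∈ D₀ := Finset.mem_filter.2 ⟨hφ, h2⟩
          have hre := Formula.realize_equivSentence_symm (M := (P : Type (max u v)))
            (Formula.equivSentence (Φ φ hφD)) wv
          rw [Equiv.symm_apply_apply] at hre
          have : (Φ φ hφD).Realize wv := (hχreal (P : Type (max u v)) wv).1 hwv φ hφD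
          have hfin := hre.1 this
          rw [hΦeq φ hφD]
          exact hfin
      haveI := hmodel
      exact Theory.Model.isSatisfiable (P : Type (max u v))
    · exfalso
      have hMc := hMΓ ξ₀ hξ₀pi hcase
      have hex : ∃ wv : Mc → Mc, χ.Realize wv :=
        ⟨fun a => a, (hχreal Mc (fun a => a)).2 fun δ hδ => hΦid δ hδ⟩
      exact ((hξ₀sem Mc).2 hex) hMc
  obtain ⟨N⟩ := hsat
  haveI hNTD : (N : Type (max u v)) ⊨ TD := N.is_model
  letI : L.Structure N := (L.lhomWithConstants Mc).reduct N
  haveI : (L.lhomWithConstants Mc).IsExpansionOn (N : Type (max u v)) :=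
    LHom.isExpansionOn_reduct _ _
  have hNT : (N : Type (max u v)) ⊨ T := by
    have h1 := (Theory.model_union_iff.1 hNTD).1
    rwa [LHom.onTheory_model] at h1
  have hdiag : ∀ σ ∈ qfDiag (L := L) Mc, (N : Type (max u v)) ⊨ σ := fun σ hσ =>
    ((Theory.model_union_iff.1 hNTD).2).realize_of_mem σ hσ
  have g : Mc ↪[L] N := qfDiagEmbedding hdiag
  exact modelsT_of_embedding hT hNT g

end Core

section Final

open Cardinal

theorem countable_model_of_sat [Finite L.Symbols] {T' : L.Theory} (h : T'.IsSatisfiable) :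
    ∃ (Mc : Type (max u v)) (_ : L.Structure Mc) (_ : Nonempty Mc) (_ : Countable Mc),
      Mc ⊨ T' := by
  obtain ⟨M₀⟩ := h
  cases finite_or_infinite (M₀ : Type (max u v)) with
  | inl hfin =>
    exact ⟨M₀, inferInstance, inferInstance, Finite.to_countable, M₀.is_model⟩
  | inr hinf =>
    have hLcard : L.card ≤ ℵ₀ := by
      have : Countable L.Symbols := Finite.to_countable
      exact Cardinal.mk_le_aleph0
    obtain ⟨S, _, hScard⟩ := exists_elementarySubstructure_card_eq L (∅ : Set M₀)
      (ℵ₀ : Cardinal.{max u v}) le_rfl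
      (by simp)
      (le_trans (Cardinal.lift_le.2 hLcard) le_rfl)
      (by rw [Cardinal.lift_le]; exact Cardinal.aleph0_le_mk _)
    rw [Cardinal.lift_inj] at hScard
    have hcnt : Countable ↥S := Cardinal.mk_le_aleph0_iff.1 (le_of_eq hScard)
    haveI : Infinite ↥S := Cardinal.infinite_iff.2 (le_of_eq hScard.symm)
    exact ⟨↥S, inferInstance, inferInstance, hcnt, (S.theory_model_iff T').2 M₀.is_model⟩

theorem gamma_unsat {T : L.Theory} [Finite L.Symbols]
    (hT : ∀ (K : Type w) [L.Structure K] [Nonempty K], K ⊨ T →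
        ∀ N : L.Substructure K, Nonempty ↥N → ↥N ⊨ T)
    {σ : L.Sentence} (hσT : σ ∈ T) :
    ¬ (({ξ : L.Sentence | IsPi1Sentence ξ ∧ ¬ (T ∪ {Formula.not ξ} : L.Theory).IsSatisfiable} ∪
        {Formula.not σ} : L.Theory)).IsSatisfiable := by
  intro hsat
  obtain ⟨Mc, _, _, _, hMc⟩ := countable_model_of_sat hsat
  have hMΓ : ∀ ξ : L.Sentence, IsPi1Sentence ξ →
      ¬ (T ∪ {Formula.not ξ} : L.Theory).IsSatisfiable → Mc ⊨ ξ := fun ξ h1 h2 =>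
    hMc.realize_of_mem ξ (Set.mem_union_left _ ⟨h1, h2⟩)
  have hMT : Mc ⊨ T := core_models hT Mc hMΓ
  have hnot : Mc ⊨ Formula.not σ := hMc.realize_of_mem _ (Set.mem_union_right _ rfl)
  rw [Sentence.realize_not] at hnot
  exact hnot (hMT.realize_of_mem σ hσT)

theorem exists_pi1_interpolant' [Finite L.Symbols] (T : L.Theory)
    (hT : ∀ (M : Type w) [L.Structure M] [Nonempty M], M ⊨ T →
        ∀ N : L.Substructure M, Nonempty ↥N → ↥N ⊨ T)
    (S : Finset L.Sentence) (hS : ↑S ⊆ T) :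
    ∃ ξ : L.Sentence, IsPi1Sentence ξ ∧
      (∀ (M : Type w) [L.Structure M] [Nonempty M], M ⊨ T → M ⊨ ξ) ∧
      (∀ (M : Type w) [L.Structure M] [Nonempty M], M ⊨ ξ → ∀ σ ∈ S, M ⊨ σ) := by
  classical
  set Γ : L.Theory :=
    {ξ : L.Sentence | IsPi1Sentence ξ ∧ ¬ (T ∪ {Formula.not ξ} : L.Theory).IsSatisfiable}
    with hΓ
  have hΓmod : ∀ ξ ∈ Γ, ∀ (M : Type w) [L.Structure M] [Nonempty M], M ⊨ T → M ⊨ ξ := by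
    intro ξ hξ M _ _ hMT
    by_contra hno
    apply hξ.2
    haveI : M ⊨ (T ∪ {Formula.not ξ} : L.Theory) := by
      rw [Theory.model_union_iff]
      exact ⟨hMT, Theory.model_singleton_iff.2 ((Sentence.realize_not M).2 hno)⟩
    exact Theory.Model.isSatisfiable M
  have hfin : ∀ σ ∈ S, ∃ F : Finset L.Sentence, ↑F ⊆ Γ ∧
      ¬ ((↑F ∪ {Formula.not σ} : L.Theory)).IsSatisfiable := by
    intro σ hσ
    have hun := gamma_unsat (T := T) hT (hS hσ)
    by_contra hcon
    push_neg at hcon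
    apply hun
    rw [Theory.isSatisfiable_iff_isFinitelySatisfiable]
    intro T0 hT0
    set F : Finset L.Sentence := T0.filter (fun x => x ∈ Γ) with hF
    have hFsub : ↑F ⊆ Γ := fun x hx => (Finset.mem_filter.1 (Finset.mem_coe.1 hx)).2
    refine (hcon F hFsub).mono ?_
    intro x hx
    rcases hT0 hx with h1 | h2
    · exact Set.mem_union_left _
        (Finset.mem_coe.2 (Finset.mem_filter.2 ⟨Finset.mem_coe.1 hx, h1⟩))
    · exact Set.mem_union_right _ h2
  choose Fs hFs₁ hFs₂ using hfin
  set FF : Finset L.Sentence := S.attach.biUnion (fun σ => Fs σ.1 σ.2) with hFF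
  have hFFΓ : ∀ ξ ∈ FF, ξ ∈ Γ := by
    intro ξ h
    obtain ⟨σ, _, hmem⟩ := Finset.mem_biUnion.1 h
    exact hFs₁ σ.1 σ.2 hmem
  obtain ⟨ξ, hξpi, hξsem⟩ := exists_pi1_conj FF (fun ξ' h' => (hFFΓ ξ' h').1)
  refine ⟨ξ, hξpi, ?_, ?_⟩
  · intro M _ _ hMT
    exact (hξsem M).2 fun ξ' h' => hΓmod ξ' (hFFΓ ξ' h') M hMT
  · intro M _ _ hMξ σ hσ
    by_contra hno
    apply hFs₂ σ hσ
    haveI : M ⊨ (↑(Fs σ hσ) ∪ {Formula.not σ} : L.Theory) := by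
      rw [Theory.model_union_iff]
      constructor
      · rw [Theory.model_iff]
        intro φ hφ
        exact (hξsem M).1 hMξ φ
          (Finset.mem_biUnion.2 ⟨⟨σ, hσ⟩, Finset.mem_attach _ _, Finset.mem_coe.1 hφ⟩)
      · exact Theory.model_singleton_iff.2 ((Sentence.realize_not M).2 hno)
    exact Theory.Model.isSatisfiable M

end Final


/-- If `T` is a theory over a finite vocabulary that is
preserved under substructures and `S` is a finite subset of `T`, then there is
a universal (Π⁰₁) sentence `ξ` with `T ⊨ ξ` and `ξ ⊨ S`: a Π⁰₁ interpolant
between `T` and `S`. -/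
theorem exists_pi1_interpolant [Finite L.Symbols] (T : L.Theory)
    (hT : ∀ (M : Type w) [L.Structure M] [Nonempty M], M ⊨ T →
        ∀ N : L.Substructure M, Nonempty ↥N → ↥N ⊨ T)
    (S : Finset L.Sentence) (hS : ↑S ⊆ T) :
    ∃ ξ : L.Sentence, IsPi1Sentence ξ ∧
      (∀ (M : Type w) [L.Structure M] [Nonempty M], M ⊨ T → M ⊨ ξ) ∧
      (∀ (M : Type w) [L.Structure M] [Nonempty M], M ⊨ ξ → ∀ σ ∈ S, M ⊨ σ) := by
  exact exists_pi1_interpolant' T hT S hS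

end LTGen
end

section
/- Let τ be a finite vocabulary, n a natural number, and N, P τ-structures. Then every Σ⁰_{n+1} sentence true in N is true in P if and only if there exist a τ-structure R that is an elementary extension of P and an embedding f of N into R such that the image of f is a Σ⁰_n-elementary substructure of R (i.e. for every Σ⁰_n formula φ(x₁,…,x_r) and every r-tuple ā from N, R ⊨ φ(f(ā)) if and only if N ⊨ φ(ā)). -/
/-!
Preservation theorems generalizing the Łoś–Tarski theorem
(Sankaran, Adsul, Chakraborty).

Conventions: a vocabulary is a `FirstOrder.Language`; following classical
model theory, all structures (and all substructures considered) are nonempty.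
-/

namespace LTGen

open FirstOrder FirstOrder.Language

universe u v w

variable {L : FirstOrder.Language.{u, v}}

/-- Witness for the generalized existential amalgamation theorem: `R` (with
structure `iR`) is an elementary extension of `P` (via some elementary
embedding) together with an embedding `f` of `N` into `R` whose image is a
Σ⁰_n-elementary substructure of `R`. -/
def ElemExtSigmaWitness (n : ℕ) (N P : Type w) [L.Structure N] [L.Structure P]
    (R : Type (max u v w)) (iR : L.Structure R) : Prop :=
  letI := iR
  Nonempty (P ↪ₑ[L] R) ∧ ∃ f : N ↪[L] R, SigmaNElementary n f

section Tools
open FirstOrder.Language.BoundedFormula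
variable {α : Type*} {M : Type*} [L.Structure M]

theorem append_mk_lt {t m : ℕ} (xs : Fin t → M) (a : Fin m → M) (j : ℕ) (hj : j < t + m)
    (h : j < t) : Fin.append xs a ⟨j, hj⟩ = xs ⟨j, h⟩ := by
  have e : (⟨j, hj⟩ : Fin (t + m)) = Fin.castAdd m ⟨j, h⟩ := rfl
  rw [e, Fin.append_left]

theorem append_mk_ge {t m : ℕ} (xs : Fin t → M) (a : Fin m → M) (j : ℕ) (hj : j < t + m)
    (h : t ≤ j) : Fin.append xs a ⟨j, hj⟩ = a ⟨j - t, by omega⟩ := by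
  have e : (⟨j, hj⟩ : Fin (t + m)) = Fin.natAdd t ⟨j - t, by omega⟩ := Fin.ext (by simp; omega)
  rw [e, Fin.append_right]

theorem append_fin_zero {t : ℕ} (xs : Fin t → M) (a : Fin 0 → M) : Fin.append xs a = xs := by
  funext i
  rw [show i = (⟨(i : ℕ), i.2⟩ : Fin (t + 0)) from rfl, append_mk_lt xs a i i.2 i.2]

theorem realize_exsN {m t : ℕ} (φ : L.BoundedFormula Empty (t + m)) (v : Empty → M)
    (xs : Fin t → M) :
    (exsN m φ).Realize v xs ↔ ∃ a : Fin m → M, φ.Realize v (Fin.append xs a) := by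
  induction m with
  | zero =>
    show φ.Realize v xs ↔ _
    constructor
    · intro h
      exact ⟨Fin.elim0, by rwa [append_fin_zero]⟩
    · rintro ⟨a, h⟩
      rwa [append_fin_zero] at h
  | succ m ih =>
    rw [show exsN (m+1) φ = exsN m φ.ex from rfl, ih]
    constructor
    · rintro ⟨a, ha⟩
      rw [realize_ex] at ha
      obtain ⟨x, hx⟩ := ha
      exact ⟨Fin.snoc a x, by rwa [Fin.append_snoc]⟩
    · rintro ⟨b, hb⟩
      refine ⟨Fin.init b, ?_⟩
      rw [realize_ex]
      refine ⟨b (Fin.last m), ?_⟩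
      rw [← Fin.append_snoc, Fin.snoc_init_self]
      exact hb

theorem realize_allsN_s16 {m t : ℕ} (φ : L.BoundedFormula Empty (t + m)) (v : Empty → M)
    (xs : Fin t → M) :
    (allsN m φ).Realize v xs ↔ ∀ a : Fin m → M, φ.Realize v (Fin.append xs a) := by
  induction m with
  | zero =>
    show φ.Realize v xs ↔ _
    constructor
    · intro h a
      rwa [append_fin_zero]
    · intro h
      have := h Fin.elim0
      rwa [append_fin_zero] at this
  | succ m ih =>
    rw [show allsN (m+1) φ = allsN m φ.all from rfl, ih]
    constructor
    · intro h b
      have := h (Fin.init b)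
      rw [realize_all] at this
      have := this (b (Fin.last m))
      rwa [← Fin.append_snoc, Fin.snoc_init_self] at this
    · intro h a
      rw [realize_all]
      intro x
      rw [← Fin.append_snoc]
      exact h _

end Tools

section Tools2
open FirstOrder.Language.BoundedFormula
variable {α : Type*}

theorem castLE_ex {t s : ℕ} (h : t + 1 ≤ s + 1) (h' : t ≤ s) (φ : L.BoundedFormula α (t + 1)) :
    (φ.ex).castLE h' = (φ.castLE h).ex := rfl

theorem castLE_all {t s : ℕ} (h : t + 1 ≤ s + 1) (h' : t ≤ s) (φ : L.BoundedFormula α (t + 1)) :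
    (φ.all).castLE h' = (φ.castLE h).all := rfl

theorem castLE_exsN {α : Type*} : ∀ (m : ℕ) {t s : ℕ} (h : t ≤ s) (hm : t + m ≤ s + m)
    (φ : L.BoundedFormula α (t + m)),
    (exsN m φ).castLE h = exsN m (φ.castLE hm)
  | 0, _, _, _, _, φ => rfl
  | m + 1, t, s, h, hm, φ => by
    show (exsN m φ.ex).castLE h = exsN m ((φ.castLE hm).ex)
    rw [castLE_exsN m h (by omega) φ.ex, castLE_ex hm]

theorem castLE_allsN {α : Type*} : ∀ (m : ℕ) {t s : ℕ} (h : t ≤ s) (hm : t + m ≤ s + m)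
    (φ : L.BoundedFormula α (t + m)),
    (allsN m φ).castLE h = allsN m (φ.castLE hm)
  | 0, _, _, _, _, φ => rfl
  | m + 1, t, s, h, hm, φ => by
    show (allsN m φ.all).castLE h = allsN m ((φ.castLE hm).all)
    rw [castLE_allsN m h (by omega) φ.all, castLE_all hm]

theorem liftAt_ex {t : ℕ} (n' m' : ℕ) (φ : L.BoundedFormula α (t + 1)) :
    (φ.ex).liftAt n' m' = ((φ.liftAt n' m').castLE (by omega)).ex := rfl

theorem liftAt_all {t : ℕ} (n' m' : ℕ) (φ : L.BoundedFormula α (t + 1)) :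
    (φ.all).liftAt n' m' = ((φ.liftAt n' m').castLE (by omega)).all := rfl

theorem isSigmaPi_castLE : ∀ (k : ℕ) (b : Bool) {t s : ℕ} (h : t ≤ s)
    {φ : L.BoundedFormula Empty t}, IsSigmaPi b k φ → IsSigmaPi b k (φ.castLE h)
  | 0, b, t, s, h, φ, hφ => hφ.castLE
  | k + 1, b, t, s, h, φ, hφ => by
    obtain ⟨m, ψ, hψ, rfl⟩ := hφ
    refine ⟨m, ψ.castLE (by omega), isSigmaPi_castLE k (!b) (by omega) hψ, ?_⟩
    cases b
    · simp only [cond_false]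
      rw [castLE_allsN m h (by omega) ψ]
    · simp only [cond_true]
      rw [castLE_exsN m h (by omega) ψ]

theorem liftAt_exsN : ∀ (m : ℕ) {t : ℕ} (n' m' : ℕ) (φ : L.BoundedFormula α (t + m)),
    (exsN m φ).liftAt n' m' = exsN m ((φ.liftAt n' m').castLE (by omega))
  | 0, t, n', m', φ => by
    show φ.liftAt n' m' = (φ.liftAt n' m').castLE (by omega)
    rw [castLE_rfl]
  | m + 1, t, n', m', φ => by
    show (exsN m φ.ex).liftAt n' m' = exsN m (((φ.liftAt n' m').castLE (by omega)).ex)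
    rw [liftAt_exsN m n' m' φ.ex, liftAt_ex n' m' φ]
    congr 1
    rw [castLE_ex (by omega) (by omega), castLE_castLE]

theorem liftAt_allsN : ∀ (m : ℕ) {t : ℕ} (n' m' : ℕ) (φ : L.BoundedFormula α (t + m)),
    (allsN m φ).liftAt n' m' = allsN m ((φ.liftAt n' m').castLE (by omega))
  | 0, t, n', m', φ => by
    show φ.liftAt n' m' = (φ.liftAt n' m').castLE (by omega)
    rw [castLE_rfl]
  | m + 1, t, n', m', φ => by
    show (allsN m φ.all).liftAt n' m' = allsN m (((φ.liftAt n' m').castLE (by omega)).all)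
    rw [liftAt_allsN m n' m' φ.all, liftAt_all n' m' φ]
    congr 1
    rw [castLE_all (by omega) (by omega), castLE_castLE]

theorem isSigmaPi_liftAt : ∀ (k : ℕ) (b : Bool) {t : ℕ} (n' m' : ℕ)
    {φ : L.BoundedFormula Empty t}, IsSigmaPi b k φ → IsSigmaPi b k (φ.liftAt n' m')
  | 0, b, t, n', m', φ, hφ => hφ.liftAt
  | k + 1, b, t, n', m', φ, hφ => by
    obtain ⟨m, ψ, hψ, rfl⟩ := hφ
    refine ⟨m, (ψ.liftAt n' m').castLE (by omega),
      isSigmaPi_castLE k (!b) (by omega) (isSigmaPi_liftAt k (!b) n' m' hψ), ?_⟩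
    cases b
    · simp only [cond_false]
      rw [liftAt_allsN m n' m' ψ]
    · simp only [cond_true]
      rw [liftAt_exsN m n' m' ψ]

/-- Add `k` new variables "at position `m'`": variables `< m'` stay, variables `≥ m'`
are shifted up by `k`. -/
def shiftAt (m' : ℕ) : ∀ (k : ℕ) {t : ℕ}, L.BoundedFormula α t → L.BoundedFormula α (t + k)
  | 0, _, φ => φ
  | k + 1, _, φ => (shiftAt m' k φ).liftAt 1 m'

def shiftFin (m' k : ℕ) {t : ℕ} (i : Fin t) : Fin (t + k) :=
  if (i : ℕ) < m' then ⟨i, by omega⟩ else ⟨(i : ℕ) + k, by omega⟩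

theorem isSigmaPi_shiftAt (k : ℕ) {kk : ℕ} (b : Bool) {t : ℕ} (m' : ℕ)
    {φ : L.BoundedFormula Empty t} (hφ : IsSigmaPi b kk φ) :
    IsSigmaPi b kk (shiftAt m' k φ) := by
  induction k with
  | zero => exact hφ
  | succ k ih => exact isSigmaPi_liftAt kk b 1 m' ih

theorem realize_shiftAt {M : Type*} [L.Structure M] {k t : ℕ} {m' : ℕ} (h : m' ≤ t)
    (φ : L.BoundedFormula α t) (v : α → M) (xs : Fin (t + k) → M) :
    (shiftAt m' k φ).Realize v xs ↔ φ.Realize v (xs ∘ shiftFin m' k) := by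
  induction k with
  | zero =>
    show φ.Realize v xs ↔ _
    have e : xs ∘ shiftFin m' 0 = xs := by
      funext i
      simp only [Function.comp_apply, shiftFin]
      split <;> exact congrArg xs (Fin.ext (by simp))
    rw [e]
  | succ k ih =>
    show ((shiftAt m' k φ).liftAt 1 m').Realize v xs ↔ _
    rw [BoundedFormula.realize_liftAt_one (by omega), ih]
    have e : (xs ∘ fun i : Fin (t + k) => if (i : ℕ) < m' then Fin.castSucc i else i.succ) ∘
        shiftFin m' k = xs ∘ shiftFin m' (k + 1) := by
      funext i
      rcases lt_or_ge (i : ℕ) m' with h' | h'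
      · have e1 : shiftFin m' k i = ⟨(i : ℕ), by omega⟩ := by unfold shiftFin; rw [if_pos h']
        have e2 : shiftFin m' (k+1) i = ⟨(i : ℕ), by omega⟩ := by unfold shiftFin; rw [if_pos h']
        simp only [Function.comp_apply, e1, e2]
        rw [if_pos (show ((⟨(i:ℕ), by omega⟩ : Fin (t+k)) : ℕ) < m' from h')]
        exact congrArg xs (Fin.ext (by simp))
      · have e1 : shiftFin m' k i = ⟨(i : ℕ) + k, by omega⟩ := by
          unfold shiftFin; rw [if_neg (by omega)]
        have e2 : shiftFin m' (k+1) i = ⟨(i : ℕ) + (k+1), by omega⟩ := by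
          unfold shiftFin; rw [if_neg (by omega)]
        simp only [Function.comp_apply, e1, e2]
        rw [if_neg (show ¬((⟨(i:ℕ)+k, by omega⟩ : Fin (t+k)) : ℕ) < m' by
            simpa using (by omega : ¬ ((i:ℕ)+k < m')))]
        exact congrArg xs (Fin.ext (by simp; omega))
    rw [e]

theorem isSigmaPi_of_isQF : ∀ (k : ℕ) (b : Bool) {t : ℕ} {φ : L.BoundedFormula Empty t},
    φ.IsQF → IsSigmaPi b k φ
  | 0, _, _, _, h => h
  | k + 1, b, t, φ, h => ⟨0, φ, isSigmaPi_of_isQF k (!b) h, by cases b <;> rfl⟩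

theorem isSigmaPi_succ : ∀ (k : ℕ) (b : Bool) {t : ℕ} {φ : L.BoundedFormula Empty t},
    IsSigmaPi b k φ → IsSigmaPi b (k + 1) φ
  | 0, b, t, φ, h => isSigmaPi_of_isQF 1 b h
  | k + 1, b, t, φ, h => by
    obtain ⟨m, ψ, hψ, rfl⟩ := h
    exact ⟨m, ψ, isSigmaPi_succ k (!b) hψ, rfl⟩

theorem isSigmaPi_not_succ {k : ℕ} {b : Bool} {t : ℕ} {φ : L.BoundedFormula Empty t}
    (h : IsSigmaPi (!b) k φ) : IsSigmaPi b (k + 1) φ :=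
  ⟨0, φ, h, by cases b <;> rfl⟩

theorem exsN_exsN {α : Type*} : ∀ (m₁ : ℕ) {m₂ t : ℕ} (χ : L.BoundedFormula α (t + m₂ + m₁))
    (h : t + m₂ + m₁ ≤ t + (m₂ + m₁)),
    exsN m₂ (exsN m₁ χ) = exsN (m₂ + m₁) (χ.castLE h)
  | 0, m₂, t, χ, h => by
    rw [castLE_rfl]
    rfl
  | m₁ + 1, m₂, t, χ, h => by
    show exsN m₂ (exsN m₁ χ.ex) = exsN (m₂ + m₁) ((χ.castLE h).ex)
    rw [exsN_exsN m₁ χ.ex (show t + m₂ + m₁ ≤ t + (m₂ + m₁) by omega),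
      castLE_ex h (show t + m₂ + m₁ ≤ t + (m₂ + m₁) by omega)]

theorem allsN_allsN {α : Type*} : ∀ (m₁ : ℕ) {m₂ t : ℕ} (χ : L.BoundedFormula α (t + m₂ + m₁))
    (h : t + m₂ + m₁ ≤ t + (m₂ + m₁)),
    allsN m₂ (allsN m₁ χ) = allsN (m₂ + m₁) (χ.castLE h)
  | 0, m₂, t, χ, h => by
    rw [castLE_rfl]
    rfl
  | m₁ + 1, m₂, t, χ, h => by
    show allsN m₂ (allsN m₁ χ.all) = allsN (m₂ + m₁) ((χ.castLE h).all)
    rw [allsN_allsN m₁ χ.all (show t + m₂ + m₁ ≤ t + (m₂ + m₁) by omega),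
      castLE_all h (show t + m₂ + m₁ ≤ t + (m₂ + m₁) by omega)]

theorem isSigmaPi_exsN {k : ℕ} {t j : ℕ} {φ : L.BoundedFormula Empty (t + j)}
    (h : IsSigmaPi true (k + 1) φ) : IsSigmaPi true (k + 1) (exsN j φ) := by
  obtain ⟨m, ψ, hψ, rfl⟩ := h
  simp only [cond_true] at *
  rw [exsN_exsN m ψ (by omega)]
  exact ⟨j + m, ψ.castLE (by omega), isSigmaPi_castLE k false (by omega) hψ, rfl⟩

theorem isSigmaPi_allsN {k : ℕ} {t j : ℕ} {φ : L.BoundedFormula Empty (t + j)}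
    (h : IsSigmaPi false (k + 1) φ) : IsSigmaPi false (k + 1) (allsN j φ) := by
  obtain ⟨m, ψ, hψ, rfl⟩ := h
  simp only [cond_false] at *
  rw [allsN_allsN m ψ (by omega)]
  exact ⟨j + m, ψ.castLE (by omega), isSigmaPi_castLE k true (by omega) hψ, rfl⟩


theorem exists_pair_iff {A B : Sort*} (p : A → Prop) (q : B → Prop) :
    (∃ b : B, ∃ a : A, p a ∧ q b) ↔ (∃ a, p a) ∧ (∃ b, q b) :=
  ⟨fun ⟨b, a, hp, hq⟩ => ⟨⟨a, hp⟩, ⟨b, hq⟩⟩, fun ⟨⟨a, hp⟩, ⟨b, hq⟩⟩ => ⟨b, a, hp, hq⟩⟩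

theorem forall_pair_iff {A B : Sort*} [Nonempty A] [Nonempty B] (p : A → Prop) (q : B → Prop) :
    (∀ b : B, ∀ a : A, p a ∧ q b) ↔ (∀ a, p a) ∧ (∀ b, q b) :=
  ⟨fun H => ⟨fun a => (H (Classical.arbitrary B) a).1, fun b => (H b (Classical.arbitrary A)).2⟩,
   fun ⟨H1, H2⟩ b a => ⟨H1 a, H2 b⟩⟩

/-- Semantic equivalence in all nonempty structures in the two universes we need. -/
def Equiv₂ {r : ℕ} (φ ψ : L.BoundedFormula Empty r) : Prop :=
  (∀ (M : Type w) [L.Structure M] [Nonempty M] (v : Empty → M) (xs : Fin r → M),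
    φ.Realize v xs ↔ ψ.Realize v xs) ∧
  (∀ (M : Type (max u v w)) [L.Structure M] [Nonempty M] (v : Empty → M) (xs : Fin r → M),
    φ.Realize v xs ↔ ψ.Realize v xs)

theorem Equiv₂.refl {r : ℕ} (φ : L.BoundedFormula Empty r) : Equiv₂.{u,v,w} φ φ :=
  ⟨fun _ _ _ _ _ => Iff.rfl, fun _ _ _ _ _ => Iff.rfl⟩

theorem exists_neg : ∀ (k : ℕ) (b : Bool) {r : ℕ} (φ : L.BoundedFormula Empty r),
    IsSigmaPi b k φ → ∃ ψ : L.BoundedFormula Empty r,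
      IsSigmaPi (!b) k ψ ∧ Equiv₂.{u,v,w} ψ φ.not
  | 0, b, r, φ, hφ => ⟨φ.not, hφ.not, Equiv₂.refl _⟩
  | k + 1, b, r, φ, hφ => by
    obtain ⟨m, χ, hχ, rfl⟩ := hφ
    obtain ⟨χ', hχ', hEq⟩ := exists_neg k (!b) χ hχ
    rw [Bool.not_not] at hχ'
    cases b
    · -- φ = allsN m χ, dual is exsN m χ'
      simp only [cond_false]
      refine ⟨exsN m χ', ⟨m, χ', hχ', rfl⟩, ?_, ?_⟩
      · intro M _ _ v xs
        rw [BoundedFormula.realize_not, realize_allsN_s16, realize_exsN, not_forall]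
        exact exists_congr fun a =>
          (hEq.1 M v _).trans (by rw [BoundedFormula.realize_not])
      · intro M _ _ v xs
        rw [BoundedFormula.realize_not, realize_allsN_s16, realize_exsN, not_forall]
        exact exists_congr fun a =>
          (hEq.2 M v _).trans (by rw [BoundedFormula.realize_not])
    · -- φ = exsN m χ, dual is allsN m χ'
      simp only [cond_true]
      refine ⟨allsN m χ', ⟨m, χ', hχ', rfl⟩, ?_, ?_⟩
      · intro M _ _ v xs
        rw [BoundedFormula.realize_not, realize_allsN_s16, realize_exsN, not_exists]
        exact forall_congr' fun a =>
          (hEq.1 M v _).trans (by rw [BoundedFormula.realize_not])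
      · intro M _ _ v xs
        rw [BoundedFormula.realize_not, realize_allsN_s16, realize_exsN, not_exists]
        exact forall_congr' fun a =>
          (hEq.2 M v _).trans (by rw [BoundedFormula.realize_not])

theorem inf_key {r m₁ m₂ : ℕ} (φ' : L.BoundedFormula Empty (r + m₁))
    (ψ' : L.BoundedFormula Empty (r + m₂)) (hcast : r + m₁ + m₂ ≤ r + m₂ + m₁)
    (hcasteq : r + m₁ + m₂ = r + m₂ + m₁) {M : Type*} [L.Structure M]
    (v : Empty → M) (xs : Fin r → M) (a₂ : Fin m₂ → M) (a₁ : Fin m₁ → M) :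
    (((shiftAt r m₂ φ').castLE hcast).Realize v (Fin.append (Fin.append xs a₂) a₁) ↔
      φ'.Realize v (Fin.append xs a₁)) ∧
    ((shiftAt (r + m₂) m₁ ψ').Realize v (Fin.append (Fin.append xs a₂) a₁) ↔
      ψ'.Realize v (Fin.append xs a₂)) := by
  constructor
  · rw [BoundedFormula.realize_castLE_of_eq hcasteq, realize_shiftAt (by omega) φ' v]
    have e : (Fin.append (Fin.append xs a₂) a₁ ∘ Fin.cast hcasteq) ∘ shiftFin r m₂ =
        Fin.append xs a₁ := by
      funext i
      rcases lt_or_ge (i : ℕ) r with h' | h'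
      · have e1 : shiftFin r m₂ i = ⟨(i : ℕ), by omega⟩ := by
          unfold shiftFin; rw [if_pos h']
        simp only [Function.comp_apply, e1]
        rw [show Fin.cast hcasteq ⟨(i:ℕ), by omega⟩ = ⟨(i:ℕ), by omega⟩ from rfl]
        rw [append_mk_lt _ _ _ _ (by omega : (i:ℕ) < r + m₂),
          append_mk_lt _ _ _ _ h', append_mk_lt _ _ _ i.2 h']
      · have e1 : shiftFin r m₂ i = ⟨(i : ℕ) + m₂, by omega⟩ := by
          unfold shiftFin; rw [if_neg (by omega)]
        simp only [Function.comp_apply, e1]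
        rw [show Fin.cast hcasteq ⟨(i:ℕ) + m₂, by omega⟩ = ⟨(i:ℕ) + m₂, by omega⟩ from rfl]
        rw [append_mk_ge _ _ _ _ (by omega : r + m₂ ≤ (i:ℕ) + m₂),
          append_mk_ge _ _ _ i.2 h']
        exact congrArg a₁ (Fin.ext (by simp; omega))
    rw [e]
  · rw [realize_shiftAt (by omega) ψ' v]
    have e : Fin.append (Fin.append xs a₂) a₁ ∘ shiftFin (r + m₂) m₁ =
        Fin.append xs a₂ := by
      funext i
      have e1 : shiftFin (r + m₂) m₁ i = ⟨(i : ℕ), by omega⟩ := by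
        unfold shiftFin; rw [if_pos i.2]
      simp only [Function.comp_apply, e1]
      rw [append_mk_lt _ _ _ _ i.2]
    rw [e]

theorem exists_inf : ∀ (k : ℕ) (b : Bool) {r : ℕ} (φ ψ : L.BoundedFormula Empty r),
    IsSigmaPi b k φ → IsSigmaPi b k ψ → ∃ χ : L.BoundedFormula Empty r,
      IsSigmaPi b k χ ∧ Equiv₂.{u,v,w} χ (φ ⊓ ψ)
  | 0, b, r, φ, ψ, hφ, hψ => ⟨φ ⊓ ψ, hφ.inf hψ, Equiv₂.refl _⟩
  | k + 1, b, r, φ, ψ, hφ, hψ => by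
    obtain ⟨m₁, φ', hφ', rfl⟩ := hφ
    obtain ⟨m₂, ψ', hψ', rfl⟩ := hψ
    have hcast : r + m₁ + m₂ ≤ r + m₂ + m₁ := by omega
    have hcasteq : r + m₁ + m₂ = r + m₂ + m₁ := by omega
    have hφ''c : IsSigmaPi (!b) k ((shiftAt r m₂ φ').castLE hcast) :=
      isSigmaPi_castLE k (!b) hcast (isSigmaPi_shiftAt m₂ (!b) r hφ')
    have hψ''c : IsSigmaPi (!b) k (shiftAt (r + m₂) m₁ ψ') :=
      isSigmaPi_shiftAt m₁ (!b) (r + m₂) hψ'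
    obtain ⟨χ₀, hχ₀, hEq₀⟩ := exists_inf k (!b) _ _ hφ''c hψ''c
    cases b
    · -- universal case
      simp only [cond_false]
      refine ⟨allsN m₂ (allsN m₁ χ₀), isSigmaPi_allsN ⟨m₁, χ₀, hχ₀, rfl⟩, ?_, ?_⟩
      · intro M _ _ v xs
        have E : ∀ (a₂ : Fin m₂ → M) (a₁ : Fin m₁ → M),
            χ₀.Realize v (Fin.append (Fin.append xs a₂) a₁) ↔
              (φ'.Realize v (Fin.append xs a₁) ∧ ψ'.Realize v (Fin.append xs a₂)) :=
          fun a₂ a₁ => (hEq₀.1 M v _).trans (by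
            rw [BoundedFormula.realize_inf, (inf_key φ' ψ' hcast hcasteq v xs a₂ a₁).1,
              (inf_key φ' ψ' hcast hcasteq v xs a₂ a₁).2])
        rw [BoundedFormula.realize_inf, realize_allsN_s16, realize_allsN_s16, realize_allsN_s16]
        simp only [realize_allsN_s16, E]
        exact forall_pair_iff _ _
      · intro M _ _ v xs
        have E : ∀ (a₂ : Fin m₂ → M) (a₁ : Fin m₁ → M),
            χ₀.Realize v (Fin.append (Fin.append xs a₂) a₁) ↔
              (φ'.Realize v (Fin.append xs a₁) ∧ ψ'.Realize v (Fin.append xs a₂)) :=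
          fun a₂ a₁ => (hEq₀.2 M v _).trans (by
            rw [BoundedFormula.realize_inf, (inf_key φ' ψ' hcast hcasteq v xs a₂ a₁).1,
              (inf_key φ' ψ' hcast hcasteq v xs a₂ a₁).2])
        rw [BoundedFormula.realize_inf, realize_allsN_s16, realize_allsN_s16, realize_allsN_s16]
        simp only [realize_allsN_s16, E]
        exact forall_pair_iff _ _
    · -- existential case
      simp only [cond_true]
      refine ⟨exsN m₂ (exsN m₁ χ₀), isSigmaPi_exsN ⟨m₁, χ₀, hχ₀, rfl⟩, ?_, ?_⟩
      · intro M _ _ v xs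
        have E : ∀ (a₂ : Fin m₂ → M) (a₁ : Fin m₁ → M),
            χ₀.Realize v (Fin.append (Fin.append xs a₂) a₁) ↔
              (φ'.Realize v (Fin.append xs a₁) ∧ ψ'.Realize v (Fin.append xs a₂)) :=
          fun a₂ a₁ => (hEq₀.1 M v _).trans (by
            rw [BoundedFormula.realize_inf, (inf_key φ' ψ' hcast hcasteq v xs a₂ a₁).1,
              (inf_key φ' ψ' hcast hcasteq v xs a₂ a₁).2])
        rw [BoundedFormula.realize_inf, realize_exsN, realize_exsN, realize_exsN]
        simp only [realize_exsN, E]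
        exact exists_pair_iff _ _
      · intro M _ _ v xs
        have E : ∀ (a₂ : Fin m₂ → M) (a₁ : Fin m₁ → M),
            χ₀.Realize v (Fin.append (Fin.append xs a₂) a₁) ↔
              (φ'.Realize v (Fin.append xs a₁) ∧ ψ'.Realize v (Fin.append xs a₂)) :=
          fun a₂ a₁ => (hEq₀.2 M v _).trans (by
            rw [BoundedFormula.realize_inf, (inf_key φ' ψ' hcast hcasteq v xs a₂ a₁).1,
              (inf_key φ' ψ' hcast hcasteq v xs a₂ a₁).2])
        rw [BoundedFormula.realize_inf, realize_exsN, realize_exsN, realize_exsN]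
        simp only [realize_exsN, E]
        exact exists_pair_iff _ _

/-! ### Equality conjunctions -/

noncomputable def eqConj {N' : Type*} {m : ℕ} (A : Fin m → N') : L.BoundedFormula Empty m :=
  ((List.finRange m ×ˢ List.finRange m).filter fun p =>
      @decide (A p.1 = A p.2) (Classical.propDecidable _)).foldr
    (fun p χ => ((Term.var (Sum.inr p.1)).bdEqual (Term.var (Sum.inr p.2))) ⊓ χ) ⊤

theorem foldr_isQF {m : ℕ} (l : List (Fin m × Fin m)) :
    (l.foldr (fun p (χ : L.BoundedFormula Empty m) =>
      ((Term.var (Sum.inr p.1)).bdEqual (Term.var (Sum.inr p.2))) ⊓ χ) ⊤).IsQF := by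
  induction l with
  | nil => exact BoundedFormula.IsQF.top
  | cons p l ih => exact ((BoundedFormula.IsAtomic.equal _ _).isQF).inf ih

theorem eqConj_isQF {N' : Type*} {m : ℕ} (A : Fin m → N') :
    (eqConj (L := L) A).IsQF := foldr_isQF _

theorem realize_foldr {M : Type*} [L.Structure M] {m : ℕ} (l : List (Fin m × Fin m))
    (v : Empty → M) (xs : Fin m → M) :
    ((l.foldr (fun p (χ : L.BoundedFormula Empty m) =>
      ((Term.var (Sum.inr p.1)).bdEqual (Term.var (Sum.inr p.2))) ⊓ χ) ⊤).Realize v xs) ↔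
      ∀ p ∈ l, xs p.1 = xs p.2 := by
  induction l with
  | nil => simp
  | cons p l ih =>
    simp only [List.foldr_cons, BoundedFormula.realize_inf, ih, List.mem_cons]
    constructor
    · rintro ⟨h1, h2⟩ q (rfl | hq)
      · simpa using h1
      · exact h2 q hq
    · intro h
      exact ⟨by simpa using h p (Or.inl rfl), fun q hq => h q (Or.inr hq)⟩

theorem realize_eqConj {N' : Type*} {M : Type*} [L.Structure M] {m : ℕ} (A : Fin m → N')
    (v : Empty → M) (xs : Fin m → M) :
    (eqConj (L := L) A).Realize v xs ↔ ∀ i j, A i = A j → xs i = xs j := by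
  rw [eqConj, realize_foldr]
  constructor
  · intro h i j hij
    exact h (i, j) (by
      rw [List.mem_filter]
      exact ⟨by simp [List.mem_product], by simpa using hij⟩)
  · rintro h ⟨i, j⟩ hp
    rw [List.mem_filter] at hp
    exact h i j (by simpa using hp.2)

/-! ### Merging fact lists -/

variable (L) in
def FactData (N' : Type*) : Type _ :=
  Σ r : ℕ, L.BoundedFormula Empty r × (Fin r → N')

section Merge

variable {N P : Type w} [L.Structure N] [L.Structure P] [Nonempty N] [Nonempty P]

theorem merge (nl : ℕ) (l : List (FactData L N))
    (hl : ∀ d ∈ l, IsSigmaPi true (nl + 1) d.2.1 ∧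
      d.2.1.Realize (fun x => x.elim) d.2.2) :
    ∃ (r : ℕ) (χ : L.BoundedFormula Empty r) (A : Fin r → N),
      IsSigmaPi true (nl + 1) χ ∧ χ.Realize (fun x => x.elim) A ∧
      ∀ (M : Type w) [L.Structure M] [Nonempty M] (xs : Fin r → M),
        χ.Realize (fun x => x.elim) xs →
        (∀ i j, A i = A j → xs i = xs j) ∧
        ∀ d ∈ l, ∃ g : Fin d.1 → Fin r, d.2.2 = A ∘ g ∧
          d.2.1.Realize (fun x => x.elim) (xs ∘ g) := by
  induction l with
  | nil =>
    refine ⟨0, ⊤, Fin.elim0, isSigmaPi_of_isQF _ _ BoundedFormula.IsQF.top, by simp, ?_⟩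
    intro M _ _ xs _
    exact ⟨fun i => i.elim0, fun d hd => absurd hd List.not_mem_nil⟩
  | cons d l ih =>
    obtain ⟨r, χ, A, hχ, hA, hM⟩ := ih fun d' hd' => hl d' (List.mem_cons_of_mem _ hd')
    obtain ⟨hd₁, hd₂⟩ := hl d List.mem_cons_self
    obtain ⟨r₀, φ₀, a₀⟩ := d
    have hc : r₀ + r ≤ r + r₀ := by omega
    have hceq : r₀ + r = r + r₀ := by omega
    have hχ₁c : IsSigmaPi true (nl + 1) (shiftAt r r₀ χ) := isSigmaPi_shiftAt r₀ true r hχ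
    have hχ₂c : IsSigmaPi true (nl + 1) ((shiftAt 0 r φ₀).castLE hc) :=
      isSigmaPi_castLE _ true hc (isSigmaPi_shiftAt r true 0 hd₁)
    have hχ₃c : IsSigmaPi true (nl + 1) (eqConj (L := L) (Fin.append A a₀)) :=
      isSigmaPi_of_isQF _ _ (eqConj_isQF _)
    obtain ⟨χ₄, hχ₄, hEq₄⟩ := exists_inf (nl + 1) true _ _ hχ₁c hχ₂c
    obtain ⟨χ₅, hχ₅, hEq₅⟩ := exists_inf (nl + 1) true _ _ hχ₄ hχ₃c
    -- pointwise index computations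
    have E1 : ∀ (M : Type w) (xs : Fin (r + r₀) → M),
        xs ∘ shiftFin r r₀ = xs ∘ Fin.castAdd r₀ := by
      intro M xs
      funext i
      simp only [Function.comp_apply]
      refine congrArg xs ?_
      unfold shiftFin
      rw [if_pos i.2]
      exact Fin.ext (by simp)
    have E2 : ∀ (M : Type w) (xs : Fin (r + r₀) → M),
        (xs ∘ Fin.cast hceq) ∘ shiftFin 0 r = xs ∘ Fin.natAdd r := by
      intro M xs
      funext i
      simp only [Function.comp_apply]
      refine congrArg xs ?_
      unfold shiftFin
      rw [if_neg (by omega)]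
      exact Fin.ext (by simp [Nat.add_comm])
    have realize₁ : ∀ (M : Type w) [L.Structure M] (xs : Fin (r + r₀) → M),
        (shiftAt r r₀ χ).Realize (fun x => x.elim) xs ↔
          χ.Realize (fun x => x.elim) (xs ∘ Fin.castAdd r₀) := by
      intro M _ xs
      rw [realize_shiftAt (le_refl r) χ _ xs, E1]
    have realize₂ : ∀ (M : Type w) [L.Structure M] (xs : Fin (r + r₀) → M),
        ((shiftAt 0 r φ₀).castLE hc).Realize (fun x => x.elim) xs ↔
          φ₀.Realize (fun x => x.elim) (xs ∘ Fin.natAdd r) := by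
      intro M _ xs
      rw [BoundedFormula.realize_castLE_of_eq hceq,
        realize_shiftAt (by omega) φ₀ _ (xs ∘ Fin.cast hceq), E2]
    refine ⟨r + r₀, χ₅, Fin.append A a₀, hχ₅, ?_, ?_⟩
    · rw [hEq₅.1 N _ _, BoundedFormula.realize_inf, hEq₄.1 N _ _,
        BoundedFormula.realize_inf, realize₁, realize₂, realize_eqConj]
      refine ⟨⟨?_, ?_⟩, fun i j hij => hij⟩
      · rwa [show Fin.append A a₀ ∘ Fin.castAdd r₀ = A from funext fun i => Fin.append_left A a₀ i]
      · rwa [show Fin.append A a₀ ∘ Fin.natAdd r = a₀ from funext fun i => Fin.append_right A a₀ i]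
    · intro M _ _ xs hxs
      rw [hEq₅.1 M _ _, BoundedFormula.realize_inf, hEq₄.1 M _ _,
        BoundedFormula.realize_inf, realize₁, realize₂, realize_eqConj] at hxs
      obtain ⟨⟨h₁, h₂⟩, h₃⟩ := hxs
      refine ⟨h₃, ?_⟩
      intro d' hd'
      rcases List.mem_cons.mp hd' with rfl | hd'
      · -- the new item
        refine ⟨Fin.natAdd r, ?_, ?_⟩
        · exact (funext fun i => (Fin.append_right A a₀ i).symm)
        · exact h₂
      · -- old items
        obtain ⟨g', hg'a, hg're⟩ := (hM M (xs ∘ Fin.castAdd r₀) h₁).2 d' hd'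
        refine ⟨Fin.castAdd r₀ ∘ g', ?_, hg're⟩
        rw [hg'a]
        funext i
        simp only [Function.comp_apply]
        exact (Fin.append_left A a₀ (g' i)).symm

theorem combine (nl : ℕ)
    (hyp : ∀ σ : L.Sentence, IsSigmaPi true (nl + 1) σ → N ⊨ σ → P ⊨ σ)
    (l : List (FactData L N))
    (hl : ∀ d ∈ l, IsSigmaPi true (nl + 1) d.2.1 ∧
      d.2.1.Realize (fun x => x.elim) d.2.2) :
    ∃ wit : N → P, ∀ d ∈ l, d.2.1.Realize (fun x => x.elim) (wit ∘ d.2.2) := by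
  classical
  obtain ⟨r, χ, A, hχ, hA, hM⟩ := merge nl l hl
  have hz : r ≤ 0 + r := by omega
  have hzeq : r = 0 + r := by omega
  set σ : L.Sentence := exsN r (χ.castLE hz) with hσdef
  have hσ : IsSigmaPi true (nl + 1) σ := isSigmaPi_exsN (isSigmaPi_castLE _ true hz hχ)
  have empty_eq : ∀ (M : Type w) (v v' : Empty → M), v = v' := fun _ v v' =>
    funext fun x => x.elim
  have fin0_eq : ∀ (M : Type w) (v v' : Fin 0 → M), v = v' := fun _ v v' =>
    funext fun x => x.elim0
  have cast_append : ∀ (M : Type w) (xs0 : Fin 0 → M) (a : Fin r → M),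
      Fin.append xs0 a ∘ Fin.cast hzeq = a := by
    intro M xs0 a
    funext i
    simp only [Function.comp_apply]
    rw [show Fin.cast hzeq i = ⟨(i : ℕ), by omega⟩ from rfl,
      append_mk_ge xs0 a _ _ (by omega)]
    exact congrArg a (Fin.ext (by simp))
  have hNσ : N ⊨ σ := by
    rw [Sentence.Realize, Formula.Realize, hσdef]
    rw [realize_exsN (χ.castLE hz) _ _]
    refine ⟨A, ?_⟩
    rw [BoundedFormula.realize_castLE_of_eq hzeq, cast_append]
    rw [empty_eq N default (fun x => x.elim)]
    exact hA
  have hPσ : P ⊨ σ := hyp σ hσ hNσ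
  rw [Sentence.Realize, Formula.Realize, hσdef, realize_exsN (χ.castLE hz) _ _] at hPσ
  obtain ⟨a, ha⟩ := hPσ
  rw [BoundedFormula.realize_castLE_of_eq hzeq, cast_append,
    empty_eq P default (fun x => x.elim)] at ha
  obtain ⟨hcons, hitems⟩ := hM P a ha
  refine ⟨fun b => if h : ∃ i, A i = b then a (Classical.choose h) else Classical.arbitrary P, ?_⟩
  intro d hd
  obtain ⟨g, hga, hgre⟩ := hitems d hd
  have e : (fun b => if h : ∃ i, A i = b then a (Classical.choose h) else Classical.arbitrary P)
      ∘ d.2.2 = a ∘ g := by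
    funext i
    have hAi : d.2.2 i = A (g i) := congrFun hga i
    simp only [Function.comp_apply, hAi]
    have hex : ∃ j, A j = A (g i) := ⟨g i, rfl⟩
    rw [dif_pos hex]
    exact hcons _ _ (Classical.choose_spec hex)
  rwa [e]

end Merge

/-! ### Fact sentences with constants -/

def factS {γ : Type w} {r : ℕ} (φ : L.BoundedFormula Empty r) (c : Fin r → γ) :
    L[[γ]].Sentence :=
  (((L.lhomWithConstants γ).onBoundedFormula φ).toFormula).subst
    (Sum.elim (fun x => x.elim) fun i => (L.con (c i)).term)

theorem realize_factS {γ : Type w} {M : Type*} [L.Structure M] [L[[γ]].Structure M]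
    [(L.lhomWithConstants γ).IsExpansionOn M] {r : ℕ} (φ : L.BoundedFormula Empty r)
    (c : Fin r → γ) :
    (factS φ c).Realize M ↔
      φ.Realize (fun x => x.elim)
        (fun i => ((L.con (c i)).term.realize (fun x : Empty => x.elim) : M)) := by
  rw [Sentence.Realize, factS, Formula.Realize, BoundedFormula.realize_subst,
    ← Formula.Realize, BoundedFormula.realize_toFormula, LHom.realize_onBoundedFormula]
  have hv : ((fun a => (Sum.elim (fun x : Empty => x.elim)
      (fun i => ((L.con (c i)).term : L[[γ]].Term Empty)) a).realize
        (default : Empty → M)) ∘ Sum.inl) = (fun x : Empty => x.elim) := by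
    funext x
    exact x.elim
  have hxs : ((fun a => (Sum.elim (fun x : Empty => x.elim)
      (fun i => ((L.con (c i)).term : L[[γ]].Term Empty)) a).realize
        (default : Empty → M)) ∘ Sum.inr) =
      (fun i => ((L.con (c i)).term.realize (fun x : Empty => x.elim) : M)) := by
    funext i
    simp only [Function.comp_apply, Sum.elim_inr]
    rw [Term.realize_constants, Term.realize_constants]
  rw [hv, hxs]

end Tools2

/-- **generalized existential amalgamation.** Over a finite
vocabulary, every Σ⁰_{n+1} sentence true in `N` is true in `P` iff there
exist an elementary extension `R` of `P` and an embedding `f` of `N` into `R`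
whose image is a Σ⁰_n-elementary substructure of `R` (i.e. for every Σ⁰_n
formula `φ(x̄)` and tuple `ā` from `N`, `R ⊨ φ(f(ā))` iff `N ⊨ φ(ā)`). -/
theorem sigmaSucc_consequences_iff_elemExt_sigmaEmbedding [Finite L.Symbols]
    (n : ℕ) (N P : Type w) [L.Structure N] [L.Structure P] [Nonempty N] [Nonempty P] :
    (∀ σ : L.Sentence, IsSigmaPi true (n + 1) σ → N ⊨ σ → P ⊨ σ) ↔
      ∃ (R : Type (max u v w)) (iR : L.Structure R),
        ElemExtSigmaWitness n N P R iR := by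
  constructor
  · -- hard direction
    intro hyp
    classical
    let FT : L[[P ⊕ N]].Theory :=
      {s | ∃ d : FactData L N, (IsSigmaPi true n d.2.1 ∨ IsSigmaPi false n d.2.1) ∧
        d.2.1.Realize (fun x => x.elim) d.2.2 ∧
        s = factS d.2.1 (fun i => (Sum.inr (d.2.2 i) : P ⊕ N))}
    let DT : L[[P ⊕ N]].Theory :=
      (L.lhomWithConstantsMap (Sum.inl : P → P ⊕ N)).onTheory (L.elementaryDiagram P)
    have hsat : (DT ∪ FT).IsSatisfiable := by
      rw [Theory.isSatisfiable_iff_isFinitelySatisfiable]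
      intro T0 hT0
      have hchoice : ∀ s ∈ T0.filter (fun s => s ∉ DT), ∃ d : FactData L N,
          (IsSigmaPi true n d.2.1 ∨ IsSigmaPi false n d.2.1) ∧
          d.2.1.Realize (fun x => x.elim) d.2.2 ∧
          s = factS d.2.1 (fun i => (Sum.inr (d.2.2 i) : P ⊕ N)) := by
        intro s hs
        rw [Finset.mem_filter] at hs
        rcases hT0 hs.1 with h | h
        · exact absurd h hs.2
        · exact h
      choose dfun h1 h2 h3 using hchoice
      let l : List (FactData L N) :=
        (T0.filter (fun s => s ∉ DT)).attach.toList.map fun s => dfun s.1 s.2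
      have hl : ∀ d ∈ l, IsSigmaPi true (n + 1) d.2.1 ∧
          d.2.1.Realize (fun x => x.elim) d.2.2 := by
        intro d hd
        simp only [l, List.mem_map] at hd
        obtain ⟨s, _, rfl⟩ := hd
        refine ⟨?_, h2 s.1 s.2⟩
        rcases h1 s.1 s.2 with h | h
        · exact isSigmaPi_succ n true h
        · exact isSigmaPi_not_succ h
      obtain ⟨wit, hwit⟩ := combine n hyp l hl
      letI csP : (constantsOn (P ⊕ N)).Structure P := constantsOn.structure (Sum.elim id wit)
      haveI hexp2 : (LHom.constantsOnMap (Sum.inl : P → P ⊕ N)).IsExpansionOn P :=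
        constantsOnMap_isExpansionOn (fα := id) rfl
      haveI hexp3 : (L.lhomWithConstantsMap (Sum.inl : P → P ⊕ N)).IsExpansionOn P := by
        unfold Language.lhomWithConstantsMap
        exact LHom.sumMap_isExpansionOn (LHom.id L) _ P
      haveI hmodel : P ⊨ (T0 : L[[P ⊕ N]].Theory) := by
        rw [Theory.model_iff]
        intro s hs
        by_cases hsDT : s ∈ DT
        · haveI hPDT : P ⊨ DT := (LHom.onTheory_model _ _).2 inferInstance
          exact DT.realize_sentence_of_mem hsDT
        · have hsF : s ∈ T0.filter (fun s => s ∉ DT) := Finset.mem_filter.2 ⟨hs, hsDT⟩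
          have hd : (dfun s hsF) ∈ l := by
            simp only [l, List.mem_map]
            exact ⟨⟨s, hsF⟩, by simp, rfl⟩
          have hw := hwit _ hd
          rw [h3 s hsF, realize_factS]
          have e : (fun i => (((L.con (Sum.inr ((dfun s hsF).2.2 i) : P ⊕ N)).term).realize
              (fun x : Empty => x.elim) : P)) = wit ∘ (dfun s hsF).2.2 := by
            funext i
            rw [Term.realize_constants]
            rfl
          rw [e]
          exact hw
      exact Theory.Model.isSatisfiable P
    obtain ⟨Mod⟩ := hsat
    letI iR : L.Structure Mod := (L.lhomWithConstants (P ⊕ N)).reduct Mod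
    haveI hexpR : (L.lhomWithConstants (P ⊕ N)).IsExpansionOn Mod :=
      LHom.isExpansionOn_reduct (L.lhomWithConstants (P ⊕ N)) Mod
    haveI hDTmod : Mod ⊨ DT := Theory.Model.mono Mod.is_model Set.subset_union_left
    letI : L[[P]].Structure Mod := (L.lhomWithConstantsMap (Sum.inl : P → P ⊕ N)).reduct Mod
    haveI hED : Mod ⊨ L.elementaryDiagram P := (LHom.onTheory_model _ _).1 hDTmod
    haveI hexp : (L.lhomWithConstants P).IsExpansionOn Mod := ⟨fun _ _ => rfl, fun _ _ => rfl⟩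
    let pe : P ↪ₑ[L] Mod := ElementaryEmbedding.ofModelsElementaryDiagram L P Mod
    let gN : N → Mod := fun b =>
      ((L.con (Sum.inr b : P ⊕ N)).term.realize (fun x : Empty => x.elim) : Mod)
    have hkey : ∀ (r : ℕ) (φ : L.BoundedFormula Empty r) (a : Fin r → N),
        (IsSigmaPi true n φ ∨ IsSigmaPi false n φ) →
        φ.Realize (fun x => x.elim) a → φ.Realize (fun x => x.elim) (gN ∘ a) := by
      intro r φ a hg hr
      have hmem : factS φ (fun i => (Sum.inr (a i) : P ⊕ N)) ∈ DT ∪ FT :=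
        Or.inr ⟨⟨r, φ, a⟩, hg, hr, rfl⟩
      have hre := (DT ∪ FT).realize_sentence_of_mem (M := Mod) hmem
      rw [realize_factS] at hre
      exact hre
    have hiff : ∀ (r : ℕ) (φ : L.BoundedFormula Empty r), IsSigmaPi true n φ →
        ∀ a : Fin r → N,
          (φ.Realize (fun x => x.elim) (gN ∘ a) ↔ φ.Realize (fun x => x.elim) a) := by
      intro r φ hφ a
      constructor
      · intro h
        by_contra hn
        obtain ⟨ψ, hψc, hEq⟩ := exists_neg n true φ hφ
        rw [Bool.not_true] at hψc
        have hNψ : ψ.Realize (fun x => x.elim) a := by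
          rw [hEq.1 N _ _, BoundedFormula.realize_not]
          exact hn
        have hMψ := hkey r ψ a (Or.inr hψc) hNψ
        rw [hEq.2 Mod _ _, BoundedFormula.realize_not] at hMψ
        exact hMψ h
      · exact hkey r φ a (Or.inl hφ)
    have hinj : Function.Injective gN := by
      intro b b' hbb
      by_contra hne
      have h := hiff 2 (((Term.var (Sum.inr 0)).bdEqual (Term.var (Sum.inr 1))).not)
        (isSigmaPi_of_isQF n true (BoundedFormula.IsAtomic.equal _ _).isQF.not) ![b, b']
      simp only [BoundedFormula.realize_not, BoundedFormula.realize_bdEqual, Term.realize_var,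
        Sum.elim_inr, Function.comp_apply, Matrix.cons_val_zero, Matrix.cons_val_one,
        Matrix.head_cons] at h
      exact (h.2 hne) hbb
    have hfun : ∀ {k : ℕ} (F : L.Functions k) (x : Fin k → N),
        gN (Structure.funMap F x) = Structure.funMap F (gN ∘ x) := by
      intro k F x
      have h := hiff (k + 1) ((Term.func F (fun i => Term.var (Sum.inr i.castSucc))).bdEqual
          (Term.var (Sum.inr (Fin.last k))))
        (isSigmaPi_of_isQF n true (BoundedFormula.IsAtomic.equal _ _).isQF)
        (Fin.snoc x (Structure.funMap F x))
      simp only [BoundedFormula.realize_bdEqual, Term.realize_func, Term.realize_var,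
        Sum.elim_inr, Function.comp_apply, Fin.snoc_castSucc, Fin.snoc_last] at h
      exact (h.2 trivial).symm
    have hrel : ∀ {k : ℕ} (R : L.Relations k) (x : Fin k → N),
        Structure.RelMap R (gN ∘ x) ↔ Structure.RelMap R x := by
      intro k R x
      have h := hiff k (R.boundedFormula (fun i => Term.var (Sum.inr i)))
        (isSigmaPi_of_isQF n true (BoundedFormula.IsAtomic.rel _ _).isQF) x
      simp only [BoundedFormula.realize_rel, Term.realize_var, Sum.elim_inr,
        Function.comp_apply] at h
      exact h
    let f : N ↪[L] Mod := ⟨⟨gN, hinj⟩, fun {k} F x => hfun F x, fun {k} R x => hrel R x⟩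
    exact ⟨Mod, iR, ⟨pe⟩, f, fun r φ hφ a => hiff r φ hφ a⟩
  · -- easy direction
    rintro ⟨R, iR, hW⟩ σ hσ hNσ
    obtain ⟨⟨pe⟩, f, hf⟩ := hW
    haveI : Nonempty R := ⟨f (Classical.arbitrary N)⟩
    obtain ⟨m, ψ, hψ, rfl⟩ := hσ
    simp only [cond_true] at *
    obtain ⟨ψ', hψ'c, hEq⟩ := exists_neg n false ψ hψ
    rw [Bool.not_false] at hψ'c
    rw [Sentence.Realize, Formula.Realize, realize_exsN ψ _ _] at hNσ
    obtain ⟨a, ha⟩ := hNσ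
    rw [show (default : Empty → N) = (fun x => x.elim) from funext fun x => x.elim] at ha
    have hNψ' : ¬ ψ'.Realize (fun x => x.elim) (Fin.append default a) := by
      rw [hEq.1 N _ _, BoundedFormula.realize_not]
      exact fun hc => hc ha
    have hRψ' : ¬ ψ'.Realize (fun x => x.elim) (⇑f ∘ Fin.append default a) := fun hc =>
      hNψ' ((hf (0 + m) ψ' hψ'c (Fin.append default a)).mp hc)
    have hRψ : ψ.Realize (fun x => x.elim) (⇑f ∘ Fin.append default a) := by
      by_contra hc
      exact hRψ' ((hEq.2 R _ _).mpr (by rwa [BoundedFormula.realize_not]))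
    have hRσ : R ⊨ exsN m ψ := by
      rw [Sentence.Realize, Formula.Realize, realize_exsN ψ _ _]
      refine ⟨⇑f ∘ a, ?_⟩
      rw [show (default : Empty → R) = (fun x => x.elim) from funext fun x => x.elim]
      have e : Fin.append (default : Fin 0 → R) (⇑f ∘ a) = ⇑f ∘ Fin.append default a := by
        funext i
        simp only [Function.comp_apply]
        rw [show i = (⟨(i : ℕ), i.2⟩ : Fin (0 + m)) from rfl]
        rw [append_mk_ge _ _ _ i.2 (by omega), append_mk_ge _ _ _ i.2 (by omega)]
        rfl
      rw [e]
      exact hRψ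
    exact (pe.map_sentence _).2 hRσ



end LTGen
end
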